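/- arXiv:1703.06616 — 10 statements merged into one kernel-verified Lean document; each statement's English description precedes it below -/
import Mathlib

section
/- The class of finite groups has the amalgamation property: if A, B, C are finite groups and f : A → B and g : A → C are injective group homomorphisms, then there exist a finite group D and injective group homomorphisms r : B → D and s : C → D such that r ∘ f = s ∘ g. -/
/-!
Choose right transversals `Q` of `f(A)` in `B` and `R` of `g(A)` in `C`. Then `A × Q × R` is
identified with `B × R` via `(a, q, r) ↦ (f a * q, r)` and with `C × Q` via
`(a, q, r) ↦ (g a * r, q)`. Letting `B` and `C` act by left multiplication on the first factor
gives faithful actions on the finite set `A × Q × R`, and in both of them `f a` and `g a` act as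
left multiplication by `a` on the `A` factor (the permutational product of B. H. Neumann).
-/

open Function

theorem MonoidHom.exists_bijective_map_mul_of_injective {A B : Type*} [Group A] [Group B]
    (f : A →* B) (hf : Injective f) :
    ∃ T : Set B, 1 ∈ T ∧ Bijective (fun x : A × T => f x.1 * x.2) := by
  obtain ⟨T, hT, hT1⟩ := f.range.exists_isComplement_right 1
  exact ⟨T, hT1, hT.comp ((Equiv.ofInjective f hf).prodCongr (Equiv.refl T)).bijective⟩

section RegularPerm

variable {G X P : Type*} [Group G]

def Equiv.regularPerm (e : X ≃ G × P) : G →* Equiv.Perm X where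
  toFun g := e.trans (((Equiv.mulLeft g).prodCongr (Equiv.refl P)).trans e.symm)
  map_one' := by ext; simp
  map_mul' g h := by ext; simp [Prod.map]

theorem Equiv.apply_regularPerm_apply (e : X ≃ G × P) (g : G) (x : X) :
    e (e.regularPerm g x) = (g * (e x).1, (e x).2) := by
  simp [regularPerm, Prod.map]

theorem Equiv.regularPerm_injective [Nonempty P] (e : X ≃ G × P) : Injective e.regularPerm := by
  intro g h hgh
  obtain ⟨p⟩ := ‹Nonempty P›
  simpa [apply_regularPerm_apply] using congr(e ($hgh (e.symm (1, p))))

theorem Equiv.regularPerm_map_eq {A Y : Type*} [Group A] (φ : A →* G) (e : A × Y ≃ G × P)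
    (he : ∀ a x, e (a * x.1, x.2) = (φ a * (e x).1, (e x).2)) (a : A) :
    e.regularPerm (φ a) = (Equiv.refl (A × Y)).regularPerm a := by
  ext1 x
  apply e.injective
  rw [apply_regularPerm_apply, ← he]
  exact congrArg e ((Equiv.refl (A × Y)).apply_regularPerm_apply a x).symm

end RegularPerm

/-- **Amalgamation property for the class of finite groups.**
If `A, B, C` are finite groups and `f : A → B`, `g : A → C` are injective group
homomorphisms (embeddings), then there exist a finite group `D` and injective group
homomorphisms `r : B → D`, `s : C → D` such that `r ∘ f = s ∘ g`. -/
theorem finiteGroups_amalgamation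
    (A B C : Type) [Group A] [Group B] [Group C] [Finite A] [Finite B] [Finite C]
    (f : A →* B) (g : A →* C)
    (hf : Function.Injective f) (hg : Function.Injective g) :
    ∃ (D : Type) (_ : Group D) (_ : Finite D) (r : B →* D) (s : C →* D),
      Function.Injective r ∧ Function.Injective s ∧ r.comp f = s.comp g := by
  obtain ⟨Q, hQ1, hQ⟩ := f.exists_bijective_map_mul_of_injective hf
  obtain ⟨R, hR1, hR⟩ := g.exists_bijective_map_mul_of_injective hg
  have : Nonempty Q := ⟨⟨1, hQ1⟩⟩
  have : Nonempty R := ⟨⟨1, hR1⟩⟩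
  let eB : A × Q × R ≃ B × R :=
    (Equiv.prodAssoc A Q R).symm.trans ((Equiv.ofBijective _ hQ).prodCongr (Equiv.refl R))
  let eC : A × Q × R ≃ C × Q :=
    ((Equiv.refl A).prodCongr (Equiv.prodComm Q R)).trans <|
      (Equiv.prodAssoc A R Q).symm.trans ((Equiv.ofBijective _ hR).prodCongr (Equiv.refl Q))
  refine ⟨Equiv.Perm (A × Q × R), inferInstance, inferInstance, eB.regularPerm, eC.regularPerm,
    eB.regularPerm_injective, eC.regularPerm_injective, MonoidHom.ext fun a => ?_⟩
  rw [MonoidHom.comp_apply, MonoidHom.comp_apply,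
    Equiv.regularPerm_map_eq f eB (fun _ _ => by simp [eB, mul_assoc]),
    Equiv.regularPerm_map_eq g eC (fun _ _ => by simp [eC, mul_assoc])]
end

section
/- For every n ≥ 1, the class of finite groups equipped with n automorphisms has the amalgamation property: let A, B, C be finite groups, let α₁,…,αₙ be automorphisms of A, let β₁,…,βₙ be automorphisms of B, and let γ₁,…,γₙ be automorphisms of C; if f : A → B and g : A → C are injective group homomorphisms satisfying f ∘ αᵢ = βᵢ ∘ f and g ∘ αᵢ = γᵢ ∘ g for each i, then there exist a finite group D, automorphisms δ₁,…,δₙ of D, and injective group homomorphisms s : B → D and t : C → D such that δᵢ ∘ s = s ∘ βᵢ and δᵢ ∘ t = t ∘ γᵢ for each i, and s ∘ f = t ∘ g. -/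
/-!
Without the automorphisms, finite groups amalgamate: choosing right transversals `T` of `f A` in
`B` and `U` of `g A` in `C` gives `B ≃ A × T` and `C ≃ A × U` as left `A`-sets, so left
multiplication makes `B` and `C` act faithfully on `A × T × U`, and both actions restrict to left
multiplication on the first factor along `A`.

To carry the automorphisms along, let `Q` be the finite group of triples of automorphisms of
`A, B, C` compatible with `f` and `g`. Then `f, g` extend to embeddings `A ⋊ Q → B ⋊ Q, C ⋊ Q`;
amalgamating these, each `δᵢ` is conjugation by the image of `(αᵢ, βᵢ, γᵢ) ∈ Q`.
-/

open Function Equiv SemidirectProduct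

theorem exists_prod_equiv_of_injective {A B : Type} [Group A] [Group B] (f : A →* B)
    (hf : Injective f) :
    ∃ (T : Type) (E : A × T ≃ B), ∀ (a : A) (x : A × T), E (a * x.1, x.2) = f a * E x := by
  let T := Quotient (QuotientGroup.rightRel f.range)
  have mk_mul_out : ∀ (a : A) (q : T), (⟦f a * q.out⟧ : T) = q := fun a q => by
    conv_rhs => rw [← q.out_eq]
    exact Quotient.sound (QuotientGroup.rightRel_apply.2 ⟨a⁻¹, by simp⟩)
  have hbij : Bijective fun x : A × T => f x.1 * x.2.out := by
    refine ⟨?_, fun b => ?_⟩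
    · rintro ⟨a, q⟩ ⟨a', q'⟩ h
      obtain rfl : q = q' := by rw [← mk_mul_out a q, ← mk_mul_out a' q']; exact congrArg _ h
      exact Prod.ext (hf (mul_right_cancel h)) rfl
    · obtain ⟨a, ha⟩ := QuotientGroup.rightRel_apply.1
        (Quotient.mk_out (s := QuotientGroup.rightRel f.range) b)
      exact ⟨(a, ⟦b⟧), by simp [ha]⟩
  refine ⟨T, .ofBijective _ hbij, fun a x => ?_⟩
  simp only [ofBijective_apply, map_mul, mul_assoc]

section PermRepresentation

def mulLeftProd (G U : Type) [Group G] : G →* Perm (G × U) where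
  toFun g := (Equiv.mulLeft g).prodCongr (Equiv.refl U)
  map_one' := by ext <;> simp
  map_mul' g h := by ext <;> simp [mul_assoc]

theorem mulLeftProd_injective (G U : Type) [Group G] [Nonempty U] :
    Injective (mulLeftProd G U) := by
  refine (injective_iff_map_eq_one _).2 fun g hg => ?_
  obtain ⟨u⟩ := ‹Nonempty U›
  simpa [mulLeftProd] using congrArg (fun σ : Perm (G × U) => (σ (1, u)).1) hg

theorem permCongrHom_prodCongr_comp_mulLeftProd (G : Type) [Group G] {U V : Type} (e : U ≃ V) :
    ((Equiv.refl G).prodCongr e).permCongrHom.toMonoidHom.comp (mulLeftProd G U) =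
      mulLeftProd G V := by
  ext g x <;> simp [mulLeftProd]

variable {A B T : Type} [Group B]

def permOfProdEquiv (E : A × T ≃ B) (U : Type) : B →* Perm (A × T × U) :=
  ((E.symm.prodCongr (Equiv.refl U)).trans (Equiv.prodAssoc A T U)).permCongrHom.toMonoidHom.comp
    (mulLeftProd B U)

theorem permOfProdEquiv_injective (E : A × T ≃ B) (U : Type) [Nonempty U] :
    Injective (permOfProdEquiv E U) := by
  rw [permOfProdEquiv, MonoidHom.coe_comp]
  exact (MulEquiv.injective _).comp (mulLeftProd_injective B U)

theorem permOfProdEquiv_comp [Group A] {f : A →* B} {E : A × T ≃ B}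
    (hE : ∀ (a : A) (x : A × T), E (a * x.1, x.2) = f a * E x) (U : Type) :
    (permOfProdEquiv E U).comp f = mulLeftProd A (T × U) := by
  ext a ⟨a', t, u⟩ <;> simp [permOfProdEquiv, mulLeftProd, ← hE]

end PermRepresentation

theorem exists_amalgamation {A B C : Type} [Group A] [Group B] [Group C] [Finite B] [Finite C]
    (f : A →* B) (g : A →* C) (hf : Injective f) (hg : Injective g) :
    ∃ (D : Type) (_ : Group D) (_ : Finite D) (s : B →* D) (t : C →* D),
      Injective s ∧ Injective t ∧ s.comp f = t.comp g := by
  obtain ⟨T, E, hE⟩ := exists_prod_equiv_of_injective f hf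
  obtain ⟨U, E', hE'⟩ := exists_prod_equiv_of_injective g hg
  have : Nonempty T := ⟨(E.symm 1).2⟩
  have : Nonempty U := ⟨(E'.symm 1).2⟩
  have : Finite (A × T) := .of_equiv _ E.symm
  have : Finite (A × U) := .of_equiv _ E'.symm
  have : Finite A := .prod_left T
  have : Finite T := .prod_right A
  have : Finite U := .prod_right A
  let swap : A × U × T ≃ A × T × U := (Equiv.refl A).prodCongr (Equiv.prodComm U T)
  refine ⟨Perm (A × T × U), inferInstance, inferInstance, permOfProdEquiv E U,
    swap.permCongrHom.toMonoidHom.comp (permOfProdEquiv E' T), permOfProdEquiv_injective E U,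
    swap.permCongrHom.injective.comp (permOfProdEquiv_injective E' T), ?_⟩
  rw [permOfProdEquiv_comp hE, MonoidHom.comp_assoc, permOfProdEquiv_comp hE',
    permCongrHom_prodCongr_comp_mulLeftProd]

namespace SemidirectProduct

variable {N G : Type} [Group N] [Group G] {φ : G →* MulAut N}

instance [Finite N] [Finite G] : Finite (N ⋊[φ] G) := .of_equiv _ equivProd.symm

theorem map_injective {N₂ G₂ : Type} [Group N₂] [Group G₂] {φ₂ : G₂ →* MulAut N₂}
    {fn : N →* N₂} {fg : G →* G₂}
    (h : ∀ g, fn.comp (φ g).toMonoidHom = (φ₂ (fg g)).toMonoidHom.comp fn)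
    (hfn : Injective fn) (hfg : Injective fg) : Injective (map fn fg h) :=
  fun _ _ hxy => SemidirectProduct.ext (hfn (congrArg left hxy)) (hfg (congrArg right hxy))

theorem conj_apply_inl {H : Type} [Group H] (F : N ⋊[φ] G →* H) (g : G) (n : N) :
    MulAut.conj (F (inr g)) (F (inl n)) = F (inl (φ g n)) := by
  rw [MulAut.conj_apply, inl_aut, map_mul, map_mul, map_inv, map_inv]

end SemidirectProduct

theorem exists_equivariant_amalgamation {Q A B C : Type} [Group Q] [Group A] [Group B] [Group C]
    [Finite Q] [Finite B] [Finite C] (φA : Q →* MulAut A) (φB : Q →* MulAut B)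
    (φC : Q →* MulAut C) (f : A →* B) (g : A →* C) (hf : Injective f) (hg : Injective g)
    (hfφ : ∀ q a, f (φA q a) = φB q (f a)) (hgφ : ∀ q a, g (φA q a) = φC q (g a)) :
    ∃ (D : Type) (_ : Group D) (_ : Finite D) (φD : Q →* MulAut D) (s : B →* D) (t : C →* D),
      Injective s ∧ Injective t ∧ (∀ q b, φD q (s b) = s (φB q b)) ∧
      (∀ q c, φD q (t c) = t (φC q c)) ∧ s.comp f = t.comp g := by
  let F : A ⋊[φA] Q →* B ⋊[φB] Q := map f (.id Q) fun q => MonoidHom.ext (hfφ q)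
  let G : A ⋊[φA] Q →* C ⋊[φC] Q := map g (.id Q) fun q => MonoidHom.ext (hgφ q)
  obtain ⟨D, _, _, s, t, hs, ht, hst⟩ := exists_amalgamation F G
    (map_injective _ hf injective_id) (map_injective _ hg injective_id)
  have hinr : s.comp inr = t.comp inr := by
    simpa only [MonoidHom.comp_assoc, F, G, map_comp_inr, MonoidHom.comp_id]
      using congrArg (·.comp inr) hst
  refine ⟨D, inferInstance, inferInstance, MulAut.conj.comp (s.comp inr), s.comp inl, t.comp inl,
    hs.comp inl_injective, ht.comp inl_injective, fun q b => conj_apply_inl s q b,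
    fun q c => ?_, ?_⟩
  · simpa only [MonoidHom.comp_apply, hinr] using conj_apply_inl t q c
  · simpa only [MonoidHom.comp_assoc, F, G, map_comp_inl] using congrArg (·.comp inl) hst

section CompatibleAutomorphisms

variable {A B C : Type} [Group A] [Group B] [Group C]

theorem map_inv_apply_of_map_apply (f : A →* B) {σ : MulAut A} {τ : MulAut B}
    (h : ∀ a, f (σ a) = τ (f a)) (a : A) : f (σ⁻¹ a) = τ⁻¹ (f a) :=
  τ.injective (by rw [← h, MulAut.apply_inv_self, MulAut.apply_inv_self])

def compatibleAutTriples (f : A →* B) (g : A →* C) :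
    Subgroup (MulAut A × MulAut B × MulAut C) where
  carrier := {σ | ∀ a, f (σ.1 a) = σ.2.1 (f a) ∧ g (σ.1 a) = σ.2.2 (g a)}
  one_mem' a := ⟨rfl, rfl⟩
  mul_mem' hσ hτ a := by
    simp only [Prod.fst_mul, Prod.snd_mul, MulAut.mul_apply, (hτ a).1, (hτ a).2, (hσ _).1, (hσ _).2,
      and_self]
  inv_mem' hσ a :=
    ⟨map_inv_apply_of_map_apply f (fun a => (hσ a).1) a,
      map_inv_apply_of_map_apply g (fun a => (hσ a).2) a⟩

end CompatibleAutomorphisms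

theorem finiteGroups_with_automorphisms_amalgamation_general
    (n : ℕ)
    (A B C : Type) [Group A] [Group B] [Group C] [Finite A] [Finite B] [Finite C]
    (α : Fin n → MulAut A) (β : Fin n → MulAut B) (γ : Fin n → MulAut C)
    (f : A →* B) (g : A →* C)
    (hf : Function.Injective f) (hg : Function.Injective g)
    (hfα : ∀ i : Fin n, ∀ a : A, f (α i a) = β i (f a))
    (hgα : ∀ i : Fin n, ∀ a : A, g (α i a) = γ i (g a)) :
    ∃ (D : Type) (_ : Group D) (_ : Finite D) (δ : Fin n → MulAut D)
      (s : B →* D) (t : C →* D),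
      Function.Injective s ∧ Function.Injective t ∧
      (∀ i : Fin n, ∀ b : B, δ i (s b) = s (β i b)) ∧
      (∀ i : Fin n, ∀ c : C, δ i (t c) = t (γ i c)) ∧
      s.comp f = t.comp g := by
  let Q := compatibleAutTriples f g
  obtain ⟨D, _, _, φD, s, t, hs, ht, hsφ, htφ, hst⟩ := exists_equivariant_amalgamation
    ((MonoidHom.fst _ _).comp Q.subtype)
    ((MonoidHom.fst _ _).comp ((MonoidHom.snd _ _).comp Q.subtype))
    ((MonoidHom.snd _ _).comp ((MonoidHom.snd _ _).comp Q.subtype))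
    f g hf hg (fun q a => (q.2 a).1) (fun q a => (q.2 a).2)
  let q (i : Fin n) : Q := ⟨(α i, β i, γ i), fun a => ⟨hfα i a, hgα i a⟩⟩
  exact ⟨D, inferInstance, inferInstance, fun i => φD (q i), s, t, hs, ht,
    fun i => hsφ (q i), fun i => htφ (q i), hst⟩

/-- **Amalgamation property for the class of finite groups with `n` automorphisms.**
Given finite groups `A, B, C` with distinguished automorphisms `αᵢ, βᵢ, γᵢ` (`i = 1,…,n`)
and embeddings `f : A → B`, `g : A → C` of systems (i.e. `f ∘ αᵢ = βᵢ ∘ f` and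
`g ∘ αᵢ = γᵢ ∘ g`), there exist a finite group `D` with automorphisms `δᵢ` and
embeddings of systems `s : B → D`, `t : C → D` such that `s ∘ f = t ∘ g`. -/
theorem finiteGroups_with_automorphisms_amalgamation
    (n : ℕ) (hn : 1 ≤ n)
    (A B C : Type) [Group A] [Group B] [Group C] [Finite A] [Finite B] [Finite C]
    (α : Fin n → MulAut A) (β : Fin n → MulAut B) (γ : Fin n → MulAut C)
    (f : A →* B) (g : A →* C)
    (hf : Function.Injective f) (hg : Function.Injective g)
    (hfα : ∀ i : Fin n, ∀ a : A, f (α i a) = β i (f a))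
    (hgα : ∀ i : Fin n, ∀ a : A, g (α i a) = γ i (g a)) :
    ∃ (D : Type) (_ : Group D) (_ : Finite D) (δ : Fin n → MulAut D)
      (s : B →* D) (t : C →* D),
      Function.Injective s ∧ Function.Injective t ∧
      (∀ i : Fin n, ∀ b : B, δ i (s b) = s (β i b)) ∧
      (∀ i : Fin n, ∀ c : C, δ i (t c) = t (γ i c)) ∧
      s.comp f = t.comp g :=
  finiteGroups_with_automorphisms_amalgamation_general n A B C α β γ f g hf hg hfα hgα
end

section
/- Let G be a finite group, let K be a subgroup of G, and let ι : K → G be an injective group homomorphism. Then there exist a finite group H, an injective group homomorphism e : G → H, and an element h ∈ H such that h · e(k) · h⁻¹ = e(ι(k)) for every k ∈ K. -/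
open QuotientGroup

/-- Decomposition of a group as (left coset) × subgroup, with explicit formulas. -/
noncomputable def cosetDecomp {G : Type} [Group G] (K : Subgroup G) :
    G ≃ (G ⧸ K) × K where
  toFun g := (QuotientGroup.mk g,
    ⟨(Quotient.out (QuotientGroup.mk g : G ⧸ K))⁻¹ * g, by
      have : (QuotientGroup.mk (Quotient.out (QuotientGroup.mk g : G ⧸ K)) : G ⧸ K)
          = QuotientGroup.mk g := Quotient.out_eq _
      exact (QuotientGroup.eq).mp this⟩)
  invFun p := Quotient.out p.1 * p.2
  left_inv g := by simp
  right_inv p := by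
    obtain ⟨c, k⟩ := p
    have h1 : (QuotientGroup.mk (Quotient.out c * (k : G)) : G ⧸ K) = c := by
      rw [QuotientGroup.mk_mul_of_mem _ k.2, QuotientGroup.out_eq']
    ext
    · simp [h1]
    · simp [h1]

theorem cosetDecomp_mul {G : Type} [Group G] (K : Subgroup G) (g : G) (k : K) :
    cosetDecomp K (g * k) = ((cosetDecomp K g).1, (cosetDecomp K g).2 * k) := by
  have h1 : (QuotientGroup.mk (g * (k : G)) : G ⧸ K) = QuotientGroup.mk g :=
    QuotientGroup.mk_mul_of_mem _ k.2
  ext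
  · simpa [cosetDecomp] using h1
  · simp [cosetDecomp, h1, mul_assoc]

/-- **Hrushovski extension property for one partial isomorphism (Hall's Lemma 1).**
Let `K` be a subgroup of a finite group `G` and `ι : K → G` an injective group
homomorphism.  Then `G` embeds into a finite group `H` via some `e : G → H` in which
the partial isomorphism `ι` is realized by conjugation: there is `h ∈ H` with
`h * e k * h⁻¹ = e (ι k)` for all `k ∈ K`. -/
theorem finiteGroups_hrushovski_one
    (G : Type) [Group G] [Finite G] (K : Subgroup G)
    (ι : K →* G) (hι : Function.Injective ι) :
    ∃ (H : Type) (_ : Group H) (_ : Finite H) (e : G →* H),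
      Function.Injective e ∧ ∃ h : H, ∀ k : K, h * e k * h⁻¹ = e (ι k) := by
  classical
  set K' : Subgroup G := ι.range with hK'
  let ιe : K ≃* K' := MonoidHom.ofInjective hι
  -- cardinalities of quotients agree
  have hcardK : Nat.card K = Nat.card K' := Nat.card_congr ιe.toEquiv
  have hG : Nat.card G = Nat.card (G ⧸ K) * Nat.card K :=
    Subgroup.card_eq_card_quotient_mul_card_subgroup K
  have hG' : Nat.card G = Nat.card (G ⧸ K') * Nat.card K' :=
    Subgroup.card_eq_card_quotient_mul_card_subgroup K'
  have hKpos : 0 < Nat.card K := Nat.card_pos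
  have hq : Nat.card (G ⧸ K) = Nat.card (G ⧸ K') := by
    have := hG.symm.trans hG'
    rw [← hcardK] at this
    exact Nat.eq_of_mul_eq_mul_right hKpos this
  have : Finite (G ⧸ K) := Quotient.finite _
  have : Finite (G ⧸ K') := Quotient.finite _
  have fq : Fintype (G ⧸ K) := Fintype.ofFinite _
  have fq' : Fintype (G ⧸ K') := Fintype.ofFinite _
  have hq' : Fintype.card (G ⧸ K) = Fintype.card (G ⧸ K') := by
    rw [← Nat.card_eq_fintype_card, ← Nat.card_eq_fintype_card]; exact hq
  let q : (G ⧸ K) ≃ (G ⧸ K') := Fintype.equivOfCardEq hq'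
  -- the permutation σ with σ (g * k) = σ g * ι k
  let σ : Equiv.Perm G :=
    (cosetDecomp K).trans ((Equiv.prodCongr q ιe.toEquiv).trans (cosetDecomp K').symm)
  have hσ : ∀ (g : G) (k : K), σ (g * k) = σ g * ι k := by
    intro g k
    simp only [σ, Equiv.trans_apply]
    rw [cosetDecomp_mul]
    simp only [Equiv.prodCongr_apply, Prod.map, MulEquiv.toEquiv_eq_coe, EquivLike.coe_coe, map_mul,
      cosetDecomp, Equiv.coe_fn_mk, Equiv.coe_fn_symm_mk]
    have hval : ((ιe k : K') : G) = ι k := MonoidHom.ofInjective_apply hι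
    rw [← hval]
    push_cast
    rw [mul_assoc]
  -- the right regular representation (inverted to make it a homomorphism)
  let e : G →* Equiv.Perm G :=
    { toFun := fun g => Equiv.mulRight g⁻¹
      map_one' := by ext x; simp
      map_mul' := by intro a b; ext x; simp [mul_assoc] }
  refine ⟨Equiv.Perm G, inferInstance, inferInstance, e, ?_, σ, ?_⟩
  · intro a b hab
    have := congrArg (fun f : Equiv.Perm G => f 1) hab
    simpa [e] using this
  · intro k
    ext x
    have := hσ (σ.symm x * (ι k)⁻¹ * ι k) -- dummy
    simp only [e, Equiv.Perm.mul_apply, MonoidHom.coe_mk, OneHom.coe_mk]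
    show σ ((Equiv.mulRight (k : G)⁻¹) (σ⁻¹ x)) = x * (ι k)⁻¹
    have hk : σ ((σ⁻¹ x : G) * ((k⁻¹ : K) : G)) = σ (σ⁻¹ x : G) * ι k⁻¹ :=
      hσ (σ⁻¹ x) k⁻¹
    simp only [Equiv.coe_mulRight]
    have hx : σ ((σ⁻¹ x : G)) = x := Equiv.apply_symm_apply σ x
    rw [show ((k : G))⁻¹ = ((k⁻¹ : K) : G) by simp, hk, hx, map_inv]
end

section
/- The class of finite groups has the Hrushovski property: let G be a finite group, let n ≥ 1, and for each i = 1,…,n let Bᵢ and Cᵢ be subgroups of G and let ψᵢ : Bᵢ → Cᵢ be a group isomorphism. Then there exist a finite group D, an injective group homomorphism e : G → D, and automorphisms φ₁,…,φₙ of D such that φᵢ(e(b)) = e(ψᵢ(b)) for every b ∈ Bᵢ and every i. -/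
/-!
Embed `G` into `Sym(G)` by its right regular action. Since `|B| = |C|`, the subgroups `B` and `C`
have the same number of left cosets, so a bijection `G ≃ (G ⧸ B) × B ≃ (G ⧸ C) × C ≃ G`, built
from a bijection of the coset spaces and from `ψ`, turns right multiplication by `b ∈ B` into right
multiplication by `ψ b`. Conjugation by this permutation is the required automorphism of `Sym(G)`.
-/

open Equiv

namespace Subgroup

variable {G : Type*} [Group G]

lemma out_inv_mul_mem (B : Subgroup G) (g : G) : ((g : G ⧸ B).out)⁻¹ * g ∈ B :=
  QuotientGroup.eq.mp (QuotientGroup.out_eq' (g : G ⧸ B))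

noncomputable def quotientProdEquiv (B : Subgroup G) : (G ⧸ B) × B ≃ G where
  toFun p := p.1.out * p.2
  invFun g := ((g : G ⧸ B), ⟨((g : G ⧸ B).out)⁻¹ * g, B.out_inv_mul_mem g⟩)
  left_inv := fun ⟨q, b⟩ => by
    have hq : ((q.out * b : G) : G ⧸ B) = q := by
      rw [QuotientGroup.mk_mul_of_mem _ b.2, QuotientGroup.out_eq']
    ext
    · exact hq
    · simp only [hq, inv_mul_cancel_left]
  right_inv g := mul_inv_cancel_left _ _

lemma quotientProdEquiv_mk_mul (B : Subgroup G) (q : G ⧸ B) (b b' : B) :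
    B.quotientProdEquiv (q, b * b') = B.quotientProdEquiv (q, b) * b' :=
  (mul_assoc _ _ _).symm

lemma card_quotient_eq_of_mulEquiv [Finite G] {B C : Subgroup G} (ψ : B ≃* C) :
    Nat.card (G ⧸ B) = Nat.card (G ⧸ C) :=
  Nat.eq_of_mul_eq_mul_right Nat.card_pos <| by
    rw [← Nat.card_prod, Nat.card_congr B.quotientProdEquiv, Nat.card_congr ψ.toEquiv,
      ← Nat.card_prod, Nat.card_congr C.quotientProdEquiv]

theorem exists_perm_mul_eq_mul_map [Finite G] {B C : Subgroup G} (ψ : B ≃* C) :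
    ∃ σ : Perm G, ∀ (g : G) (b : B), σ (g * b) = σ g * ψ b := by
  obtain ⟨f⟩ := Finite.card_eq.mp (card_quotient_eq_of_mulEquiv ψ)
  refine ⟨B.quotientProdEquiv.symm.trans ((f.prodCongr ψ.toEquiv).trans C.quotientProdEquiv),
    fun g b => ?_⟩
  obtain ⟨⟨q, s⟩, rfl⟩ := B.quotientProdEquiv.surjective g
  simp only [trans_apply, ← quotientProdEquiv_mk_mul, symm_apply_apply, prodCongr_apply,
    Prod.map, MulEquiv.toEquiv_eq_coe, MulEquiv.coe_toEquiv, map_mul]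

end Subgroup

theorem finiteGroups_hrushovski_general
    (G : Type) [Group G] [Finite G] (n : ℕ)
    (B C : Fin n → Subgroup G) (ψ : ∀ i : Fin n, (B i) ≃* (C i)) :
    ∃ (D : Type) (_ : Group D) (_ : Finite D) (e : G →* D) (φ : Fin n → MulAut D),
      Function.Injective e ∧
      ∀ i : Fin n, ∀ b : B i, φ i (e b) = e (ψ i b) := by
  choose σ hσ using fun i => Subgroup.exists_perm_mul_eq_mul_map (ψ i)
  let e : G →* Perm G := (MulAction.toPermHom Gᵐᵒᵖ G).comp (MulEquiv.inv' G).toMonoidHom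
  refine ⟨Perm G, inferInstance, inferInstance, e, fun i => MulAut.conj (σ i),
    MulAction.toPerm_injective.comp (MulEquiv.inv' G).injective, fun i b => ?_⟩
  rw [MulAut.conj_apply, mul_inv_eq_iff_eq_mul]
  ext x
  simpa [e] using hσ i x b⁻¹

/-- **Hrushovski property for the class of finite groups.**
Let `G` be a finite group and, for `i = 1, …, n`, let `ψᵢ : Bᵢ → Cᵢ` be an isomorphism
between subgroups of `G`.  Then there exist a finite group `D`, an embedding `e : G → D`,
and automorphisms `φ₁, …, φₙ` of `D` extending the partial isomorphisms:
`φᵢ (e b) = e (ψᵢ b)` for all `b ∈ Bᵢ`. -/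
theorem finiteGroups_hrushovski
    (G : Type) [Group G] [Finite G] (n : ℕ) (hn : 1 ≤ n)
    (B C : Fin n → Subgroup G) (ψ : ∀ i : Fin n, (B i) ≃* (C i)) :
    ∃ (D : Type) (_ : Group D) (_ : Finite D) (e : G →* D) (φ : Fin n → MulAut D),
      Function.Injective e ∧
      ∀ i : Fin n, ∀ b : B i, φ i (e b) = e (ψ i b) :=
  finiteGroups_hrushovski_general G n B C ψ
end

section
/- Let H be a Hall universal group. Then the group Inn(H) of inner automorphisms of H, i.e., the range of the conjugation homomorphism H → Aut(H) sending a to the automorphism x ↦ a x a⁻¹, is dense in Aut(H). -/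
/-- A group `H` is a *Hall universal group* if it is countable, locally finite,
every finite group embeds into it, and any two isomorphic finite subgroups are
conjugate in `H`.  (Philip Hall's universal locally finite group is the unique
such group up to isomorphism.) -/
structure IsHallUniversal (H : Type*) [Group H] : Prop where
  /-- `H` is countable. -/
  countable : Countable H
  /-- `H` is locally finite: every finitely generated subgroup is finite. -/
  locallyFinite : ∀ S : Subgroup H, S.FG → Finite S
  /-- Every finite group embeds into `H`. -/
  embedsFinite : ∀ (G : Type) [Group G] [Finite G], ∃ f : G →* H, Function.Injective f
  /-- Any two isomorphic finite subgroups of `H` are conjugate in `H`. -/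
  conjIso : ∀ A B : Subgroup H, Finite A → Finite B → Nonempty (A ≃* B) →
    ∃ h : H, Subgroup.map (MulAut.conj h).toMonoidHom A = B

/-- The topology of pointwise convergence on `Aut H`: the topology induced by viewing an
automorphism `f` as the function `f : H → H` in the product space `H → H`, where `H`
carries the discrete topology. -/
instance hallAutTopology (H : Type*) [Group H] : TopologicalSpace (MulAut H) :=
  letI : TopologicalSpace H := ⊥
  TopologicalSpace.induced (fun f : MulAut H => (f : H → H)) Pi.topologicalSpace


/-! A basic neighbourhood of `f ∈ Aut H` prescribes the values of `f` on a finite set, hence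
on the finite subgroup `A` it generates. So it suffices that every embedding `φ : A → H` of a
finite subgroup is conjugation by an element of `H`. Put `C = ⟨A, φ A⟩`, again finite. Composing
the regular representation `C → Sym C` with an embedding `Sym C → H` gives a copy of `C`, which
Hall's axiom conjugates back onto `C` up to an automorphism `π` of `C`. Inside `Sym C`, the
actions of `A` on `C` by left multiplication through `π` and through `π ∘ φ` are both free with
`|C| / |A|` orbits, so they are conjugate; transporting that conjugating permutation back to `H`
gives the required element. -/

open Function

section FreeActions

variable {A C : Type*} [Group A] [Group C]

theorem MonoidHom.bijective_mul_of_isComplement {u : A →* C} (hu : Injective u) {T : Set C}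
    (hT : Subgroup.IsComplement (u.range : Set C) T) :
    Bijective fun p : A × T => u p.1 * p.2 :=
  hT.comp ((MonoidHom.ofInjective hu).bijective.prodMap bijective_id)

theorem exists_perm_conj_toPerm_eq [Finite C] {u v : A →* C} (hu : Injective u)
    (hv : Injective v) :
    ∃ σ : Equiv.Perm C, ∀ a : A, σ * MulAction.toPerm (u a) * σ⁻¹ = MulAction.toPerm (v a) := by
  obtain ⟨Tu, hTu, -⟩ := Subgroup.exists_isComplement_right u.range 1
  obtain ⟨Tv, hTv, -⟩ := Subgroup.exists_isComplement_right v.range 1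
  let eu := Equiv.ofBijective _ (MonoidHom.bijective_mul_of_isComplement hu hTu)
  let ev := Equiv.ofBijective _ (MonoidHom.bijective_mul_of_isComplement hv hTv)
  have : Finite A := Finite.of_injective u hu
  have hcard : Nat.card Tu = Nat.card Tv := by
    have h := (Nat.card_congr eu).trans (Nat.card_congr ev).symm
    rw [Nat.card_prod, Nat.card_prod] at h
    exact Nat.eq_of_mul_eq_mul_left Nat.card_pos h
  obtain ⟨τ⟩ := Finite.card_eq.mp hcard
  refine ⟨eu.symm.trans ((Equiv.prodCongr (Equiv.refl A) τ).trans ev), fun a => ?_⟩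
  rw [mul_inv_eq_iff_eq_mul]
  ext c
  obtain ⟨⟨b, t⟩, rfl⟩ := eu.surjective c
  have hu' : u a * eu (b, t) = eu (a * b, t) := by simp [eu, mul_assoc]
  simp [hu', ev, mul_assoc]

end FreeActions

theorem MulAut.dense_of_forall_finset_exists_eqOn {H : Type*} [Group H] {S : Set (MulAut H)}
    (hS : ∀ (f : MulAut H) (I : Finset H), ∃ g ∈ S, ∀ i ∈ I, g i = f i) : Dense S := by
  let _ : TopologicalSpace H := ⊥
  have : DiscreteTopology H := ⟨rfl⟩
  rw [dense_iff_inter_open]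
  rintro U hU ⟨f, hf⟩
  obtain ⟨V, hV, rfl⟩ := isOpen_induced_iff.mp hU
  obtain ⟨I, w, hw, hsub⟩ := isOpen_pi_iff.mp hV _ hf
  obtain ⟨g, hgS, hgf⟩ := hS f I
  refine ⟨g, hsub fun i hi => ?_, hgS⟩
  change g i ∈ w i
  exact hgf i hi ▸ (hw i hi).2

namespace IsHallUniversal

variable {H : Type*} [Group H]

theorem finite_closure (hH : IsHallUniversal H) {s : Set H} (hs : s.Finite) :
    Finite (Subgroup.closure s) :=
  hH.locallyFinite _ ((Subgroup.fg_iff _).2 ⟨s, rfl, hs⟩)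

theorem exists_injective_monoidHom (hH : IsHallUniversal H) (G : Type*) [Group G] [Finite G] :
    ∃ f : G →* H, Injective f := by
  obtain ⟨f, hf⟩ := hH.embedsFinite (Shrink.{0} G)
  let e : G ≃* Shrink.{0} G := Shrink.mulEquiv.symm
  exact ⟨f.comp e.toMonoidHom, hf.comp e.injective⟩

theorem exists_comp_mulEquiv_eq_conj (hH : IsHallUniversal H) (C : Subgroup H) [Finite C]
    {χ : C →* H} (hχ : Injective χ) :
    ∃ (k : H) (π : C ≃* C), ∀ c : C, χ (π c) = k * c * k⁻¹ := by
  have : Finite χ.range := Finite.of_surjective _ χ.rangeRestrict_surjective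
  obtain ⟨k, hk⟩ := hH.conjIso C χ.range ‹_› ‹_› ⟨MonoidHom.ofInjective hχ⟩
  refine ⟨k, ((C.equivMapOfInjective _ (MulAut.conj k).injective).trans
    (MulEquiv.subgroupCongr hk)).trans (MonoidHom.ofInjective hχ).symm, fun c => ?_⟩
  exact MonoidHom.apply_ofInjective_symm hχ _

theorem exists_conj_eq_of_injective (hH : IsHallUniversal H) (A : Subgroup H) [Finite A]
    {φ : A →* H} (hφ : Injective φ) : ∃ h : H, ∀ a : A, h * a * h⁻¹ = φ a := by
  set C := Subgroup.closure ((A : Set H) ∪ Set.range φ)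
  have : Finite C := hH.finite_closure ((Set.toFinite _).union (Set.finite_range φ))
  obtain ⟨ψ, hψ⟩ := hH.exists_injective_monoidHom (Equiv.Perm C)
  obtain ⟨k, π, hπ⟩ := hH.exists_comp_mulEquiv_eq_conj C
    (χ := ψ.comp (MulAction.toPermHom C C)) (hψ.comp MulAction.toPerm_injective)
  let ι : A →* C := Subgroup.inclusion fun a ha => Subgroup.subset_closure (Or.inl ha)
  let φC : A →* C := φ.codRestrict C fun a => Subgroup.subset_closure (Or.inr ⟨a, rfl⟩)
  obtain ⟨σ, hσ⟩ := exists_perm_conj_toPerm_eq (u := π.toMonoidHom.comp ι)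
    (v := π.toMonoidHom.comp φC) (π.injective.comp (Subgroup.inclusion_injective _))
    (π.injective.comp fun a b hab => hφ (congrArg Subtype.val hab))
  refine ⟨k⁻¹ * ψ σ * k, fun a => ?_⟩
  have hconj : ψ σ * (k * a * k⁻¹) * (ψ σ)⁻¹ = k * φ a * k⁻¹ := by
    have hu : ψ (MulAction.toPerm (π (ι a))) = k * a * k⁻¹ := hπ (ι a)
    have hv : ψ (MulAction.toPerm (π (φC a))) = k * φ a * k⁻¹ := hπ (φC a)
    have h := congrArg ψ (hσ a)
    rwa [map_mul, map_mul, map_inv, MonoidHom.comp_apply, MonoidHom.comp_apply,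
      MulEquiv.coe_toMonoidHom, hu, hv] at h
  calc k⁻¹ * ψ σ * k * a * (k⁻¹ * ψ σ * k)⁻¹ = k⁻¹ * (ψ σ * (k * a * k⁻¹) * (ψ σ)⁻¹) * k := by
        group
    _ = φ a := by rw [hconj]; group

end IsHallUniversal

/-- **`Inn H` is dense in `Aut H`.**  The range of the conjugation homomorphism
`MulAut.conj : H → Aut H` (i.e. the group of inner automorphisms of `H`) is dense in
`Aut H` with the topology of pointwise convergence. -/
theorem hallUniversal_inn_dense
    (H : Type*) [Group H] (hH : IsHallUniversal H) :
    Dense (Set.range (fun a : H => MulAut.conj a)) := by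
  refine MulAut.dense_of_forall_finset_exists_eqOn fun f I => ?_
  let A := Subgroup.closure (I : Set H)
  have : Finite A := hH.finite_closure I.finite_toSet
  obtain ⟨h, hh⟩ := hH.exists_conj_eq_of_injective A (φ := f.toMonoidHom.comp A.subtype)
    (f.injective.comp Subtype.val_injective)
  exact ⟨MulAut.conj h, ⟨h, rfl⟩, fun i hi => hh ⟨i, Subgroup.subset_closure hi⟩⟩
end

section
/- Let H be a Hall universal group. Then Aut(H) is not a simple group: there exists a normal subgroup of Aut(H) that is neither the trivial subgroup nor all of Aut(H). -/
namespace HallAux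

variable {H : Type*} [Group H]

lemma finite_closure (hH : IsHallUniversal H) {s : Set H} (hs : s.Finite) :
    Finite (Subgroup.closure s) :=
  hH.locallyFinite _ ((Subgroup.fg_iff _).2 ⟨s, rfl, hs⟩)

/-- Universe-polymorphic version of `embedsFinite`. -/
lemma embedsFinite' (hH : IsHallUniversal H) (G : Type*) [Group G] [Finite G] :
    ∃ f : G →* H, Function.Injective f := by
  haveI : Small.{0} G := Countable.toSmall G
  haveI : Finite (Shrink.{0} G) := Finite.of_equiv G (equivShrink G)
  obtain ⟨f, hf⟩ := hH.embedsFinite (Shrink.{0} G)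
  exact ⟨f.comp (Shrink.mulEquiv (α := G)).symm.toMonoidHom,
    hf.comp (MulEquiv.injective _)⟩

/-- The centralizer of any finite subgroup contains a noncommuting pair. -/
lemma exists_noncomm_centralizer (hH : IsHallUniversal H) (A : Subgroup H) (hA : Finite A) :
    ∃ x y : H, x ∈ Subgroup.centralizer (A : Set H) ∧ y ∈ Subgroup.centralizer (A : Set H) ∧
      x * y ≠ y * x := by
  classical
  haveI := hA
  obtain ⟨f, hf⟩ := embedsFinite' hH (A × Equiv.Perm (Fin 3))
  let ι : A →* H := f.comp (MonoidHom.inl A (Equiv.Perm (Fin 3)))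
  have hι : Function.Injective ι := by
    intro a b hab
    have := hf hab
    exact congrArg Prod.fst this
  have hAfin : Finite ι.range := Set.Finite.to_subtype (Set.finite_range ι)
  have iso : Nonempty ((ι.range : Subgroup H) ≃* A) :=
    ⟨(MonoidHom.ofInjective hι).symm⟩
  obtain ⟨h, hmap⟩ := hH.conjIso ι.range A hAfin hA iso
  let σ : Equiv.Perm (Fin 3) := Equiv.swap 0 1
  let τ : Equiv.Perm (Fin 3) := Equiv.swap 0 2
  have centr : ∀ ρ : Equiv.Perm (Fin 3),
      h * f (1, ρ) * h⁻¹ ∈ Subgroup.centralizer (A : Set H) := by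
    intro ρ
    rw [Subgroup.mem_centralizer_iff]
    intro b hb
    rw [← hmap] at hb
    obtain ⟨b', hb', rfl⟩ := hb
    obtain ⟨k, rfl⟩ := hb'
    have hcomm : ι k * f (1, ρ) = f (1, ρ) * ι k := by
      show f (k, 1) * f (1, ρ) = f (1, ρ) * f (k, 1)
      rw [← map_mul, ← map_mul]
      congr 1
      simp [Prod.ext_iff]
    show (MulAut.conj h) (ι k) * (h * f (1, ρ) * h⁻¹)
        = (h * f (1, ρ) * h⁻¹) * (MulAut.conj h) (ι k)
    have e0 : (MulAut.conj h) (ι k) = h * ι k * h⁻¹ := rfl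
    rw [e0]
    calc h * ι k * h⁻¹ * (h * f (1, ρ) * h⁻¹)
        = h * (ι k * f (1, ρ)) * h⁻¹ := by group
      _ = h * (f (1, ρ) * ι k) * h⁻¹ := by rw [hcomm]
      _ = h * f (1, ρ) * h⁻¹ * (h * ι k * h⁻¹) := by group
  refine ⟨h * f (1, σ) * h⁻¹, h * f (1, τ) * h⁻¹, centr σ, centr τ, ?_⟩
  intro hcomm
  have h1 : f (1, σ) * f (1, τ) = f (1, τ) * f (1, σ) := by
    have e1 : h * (f (1, σ) * f (1, τ)) * h⁻¹ = h * (f (1, τ) * f (1, σ)) * h⁻¹ := by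
      calc h * (f (1, σ) * f (1, τ)) * h⁻¹
          = (h * f (1, σ) * h⁻¹) * (h * f (1, τ) * h⁻¹) := by group
        _ = (h * f (1, τ) * h⁻¹) * (h * f (1, σ) * h⁻¹) := hcomm
        _ = h * (f (1, τ) * f (1, σ)) * h⁻¹ := by group
    have := mul_right_cancel e1
    exact mul_left_cancel this
  rw [← map_mul, ← map_mul] at h1
  have h2 : ((1, σ) : A × Equiv.Perm (Fin 3)) * (1, τ) = (1, τ) * (1, σ) := hf h1
  have h3 : σ * τ = τ * σ := congrArg Prod.snd h2
  have : σ * τ ≠ τ * σ := by decide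
  exact this h3

/-- One step of the back-and-forth construction. -/
lemma step (hH : IsHallUniversal H) (A : Subgroup H) (hA : Finite A) (g x : H) :
    ∃ (A' : Subgroup H) (g' : H), Finite A' ∧ A ≤ A' ∧
      (∀ b ∈ A, g' * b * g'⁻¹ = g * b * g⁻¹) ∧
      x ∈ A' ∧ g'⁻¹ * x * g' ∈ A' ∧ ∃ a ∈ A', g' * a * g'⁻¹ ≠ x * a * x⁻¹ := by
  classical
  obtain ⟨u, v, hu, hv, huv⟩ := exists_noncomm_centralizer hH A hA
  have key : ∃ c ∈ Subgroup.centralizer (A : Set H),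
      ∃ a : H, c * a * c⁻¹ ≠ (g⁻¹ * x) * a * (g⁻¹ * x)⁻¹ := by
    by_contra hcon
    push_neg at hcon
    have h1 := hcon u hu v
    have h2 := hcon v hv v
    have h3 : u * v * u⁻¹ = v * v * v⁻¹ := h1.trans h2.symm
    have h4 : u * v * u⁻¹ = v := by rw [h3]; group
    apply huv
    calc u * v = (u * v * u⁻¹) * u := by group
      _ = v * u := by rw [h4]
  obtain ⟨c, hc, a, hca⟩ := key
  haveI := hA
  haveI : Finite (A : Set H) := inferInstance
  set g' := g * c with hg'
  set S : Set H := (A : Set H) ∪ {x, g'⁻¹ * x * g', a} with hS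
  have hSfin : S.Finite := (Set.toFinite (A : Set H)).union (by
    apply Set.Finite.insert; apply Set.Finite.insert; exact Set.finite_singleton _)
  refine ⟨Subgroup.closure S, g', finite_closure hH hSfin, ?_, ?_, ?_, ?_, a, ?_, ?_⟩
  · intro b hb; exact Subgroup.subset_closure (Or.inl hb)
  · intro b hb
    have hcb : b * c = c * b := (Subgroup.mem_centralizer_iff.1 hc) b hb
    have : c * b * c⁻¹ = b := by rw [← hcb]; group
    calc g' * b * g'⁻¹ = g * (c * b * c⁻¹) * g⁻¹ := by rw [hg']; group
      _ = g * b * g⁻¹ := by rw [this]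
  · exact Subgroup.subset_closure (Or.inr (by simp))
  · exact Subgroup.subset_closure (Or.inr (by simp))
  · exact Subgroup.subset_closure (Or.inr (by simp))
  · intro heq
    apply hca
    have : c * a * c⁻¹ = g⁻¹ * (g' * a * g'⁻¹) * g := by rw [hg']; group
    rw [heq] at this
    rw [this]; group

end HallAux

/-- **`Aut H` is not simple.**  There is a normal subgroup of `Aut H` that is neither
trivial nor all of `Aut H`. -/
theorem hallUniversal_aut_not_simple
    (H : Type*) [Group H] (hH : IsHallUniversal H) :
    ∃ N : Subgroup (MulAut H), N.Normal ∧ N ≠ ⊥ ∧ N ≠ ⊤ := by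
  classical
  haveI : Countable H := hH.countable
  obtain ⟨en, hen⟩ := exists_surjective_nat H
  -- the iterated back-and-forth construction
  have stepAll : ∀ p : {q : Subgroup H × H // Finite q.1}, ∀ n : ℕ,
      ∃ p' : {q : Subgroup H × H // Finite q.1},
        p.1.1 ≤ p'.1.1 ∧ (∀ b ∈ p.1.1, p'.1.2 * b * p'.1.2⁻¹ = p.1.2 * b * p.1.2⁻¹) ∧
        en n ∈ p'.1.1 ∧ p'.1.2⁻¹ * en n * p'.1.2 ∈ p'.1.1 ∧
        ∃ a ∈ p'.1.1, p'.1.2 * a * p'.1.2⁻¹ ≠ en n * a * (en n)⁻¹ := by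
    rintro ⟨⟨A, g⟩, hA⟩ n
    obtain ⟨A', g', hfin, hle, hag, hx, hx', ha⟩ := HallAux.step hH A hA g (en n)
    exact ⟨⟨(A', g'), hfin⟩, hle, hag, hx, hx', ha⟩
  choose F hF1 hF2 hF3 hF4 hF5 using stepAll
  let base : {q : Subgroup H × H // Finite q.1} :=
    ⟨(⊥, 1), by simpa using (inferInstance : Finite (⊥ : Subgroup H))⟩
  let seq : ℕ → {q : Subgroup H × H // Finite q.1} :=
    fun n => Nat.rec base (fun m ih => F ih m) n
  let A : ℕ → Subgroup H := fun n => (seq n).1.1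
  let g : ℕ → H := fun n => (seq n).1.2
  have hle : ∀ n, A n ≤ A (n + 1) := fun n => hF1 (seq n) n
  have hagree : ∀ n, ∀ b ∈ A n, g (n + 1) * b * (g (n + 1))⁻¹ = g n * b * (g n)⁻¹ :=
    fun n => hF2 (seq n) n
  have hmem : ∀ n, en n ∈ A (n + 1) := fun n => hF3 (seq n) n
  have hsurj : ∀ n, (g (n + 1))⁻¹ * en n * g (n + 1) ∈ A (n + 1) := fun n => hF4 (seq n) n
  have hdiag : ∀ n, ∃ a ∈ A (n + 1), g (n + 1) * a * (g (n + 1))⁻¹ ≠ en n * a * (en n)⁻¹ :=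
    fun n => hF5 (seq n) n
  have hmono : ∀ m n, m ≤ n → A m ≤ A n := by
    intro m n h
    induction h with
    | refl => exact le_refl _
    | step h ih => exact ih.trans (hle _)
  have hstable : ∀ m n, m ≤ n → ∀ b ∈ A m, g n * b * (g n)⁻¹ = g m * b * (g m)⁻¹ := by
    intro m n h
    induction h with
    | refl => intro b _; rfl
    | @step k h ih =>
      intro b hb
      rw [hagree k b (hmono m k h hb)]
      exact ih b hb
  have cover : ∀ x : H, ∃ n, x ∈ A n := by
    intro x
    obtain ⟨n, rfl⟩ := hen x
    exact ⟨n + 1, hmem n⟩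
  choose idx hidx using cover
  let φf : H → H := fun x => g (idx x) * x * (g (idx x))⁻¹
  have φspec : ∀ x n, x ∈ A n → φf x = g n * x * (g n)⁻¹ := by
    intro x n hx
    have h1 := hstable (idx x) (max (idx x) n) (le_max_left _ _) x (hidx x)
    have h2 := hstable n (max (idx x) n) (le_max_right _ _) x hx
    show g (idx x) * x * (g (idx x))⁻¹ = g n * x * (g n)⁻¹
    rw [← h1, h2]
  have φmul : ∀ x y : H, φf (x * y) = φf x * φf y := by
    intro x y
    set n := max (idx x) (idx y) with hn
    have hx : x ∈ A n := hmono _ _ (le_max_left _ _) (hidx x)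
    have hy : y ∈ A n := hmono _ _ (le_max_right _ _) (hidx y)
    rw [φspec x n hx, φspec y n hy, φspec (x * y) n (mul_mem hx hy)]
    group
  let φh : H →* H := MonoidHom.mk' φf φmul
  have φinj : Function.Injective φh := by
    intro x y hxy
    set n := max (idx x) (idx y) with hn
    have hx : x ∈ A n := hmono _ _ (le_max_left _ _) (hidx x)
    have hy : y ∈ A n := hmono _ _ (le_max_right _ _) (hidx y)
    have : g n * x * (g n)⁻¹ = g n * y * (g n)⁻¹ := by
      rw [← φspec x n hx, ← φspec y n hy]; exact hxy
    have := mul_right_cancel this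
    exact mul_left_cancel this
  have φsurj : Function.Surjective φh := by
    intro y
    obtain ⟨n, rfl⟩ := hen y
    refine ⟨(g (n + 1))⁻¹ * en n * g (n + 1), ?_⟩
    have hx : (g (n + 1))⁻¹ * en n * g (n + 1) ∈ A (n + 1) := hsurj n
    show φf _ = en n
    rw [φspec _ (n + 1) hx]
    group
  let φ : MulAut H := MulEquiv.ofBijective φh ⟨φinj, φsurj⟩
  have φnotinner : ∀ h : H, MulAut.conj h ≠ φ := by
    intro h hcontra
    obtain ⟨n, rfl⟩ := hen h
    obtain ⟨a, ha, hane⟩ := hdiag n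
    apply hane
    have e1 : φ a = g (n + 1) * a * (g (n + 1))⁻¹ := φspec a (n + 1) ha
    have e2 : (MulAut.conj (en n)) a = en n * a * (en n)⁻¹ := rfl
    rw [← e1, ← e2, hcontra]
  refine ⟨(MulAut.conj : H →* MulAut H).range, ?_, ?_, ?_⟩
  · constructor
    rintro x ⟨h, rfl⟩ ψ
    refine ⟨ψ h, ?_⟩
    ext y
    show ψ h * y * (ψ h)⁻¹ = (ψ * MulAut.conj h * ψ⁻¹) y
    have : (ψ * MulAut.conj h * ψ⁻¹) y = ψ (h * (ψ⁻¹ y) * h⁻¹) := rfl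
    rw [this, map_mul, map_mul, map_inv]
    simp
  · intro hbot
    obtain ⟨f3, hf3⟩ := hH.embedsFinite (Equiv.Perm (Fin 3))
    set u := f3 (Equiv.swap 0 1) with hu
    set v := f3 (Equiv.swap 0 2) with hv
    have huv : u * v ≠ v * u := by
      intro hcomm
      rw [hu, hv, ← map_mul, ← map_mul] at hcomm
      have := hf3 hcomm
      have h2 : Equiv.swap (0 : Fin 3) 1 * Equiv.swap 0 2 ≠ Equiv.swap 0 2 * Equiv.swap 0 1 := by
        decide
      exact h2 this
    have hmem' : MulAut.conj u ∈ (MulAut.conj : H →* MulAut H).range := ⟨u, rfl⟩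
    rw [hbot, Subgroup.mem_bot] at hmem'
    apply huv
    have : (MulAut.conj u) v = v := by rw [hmem']; rfl
    have h3 : u * v * u⁻¹ = v := this
    calc u * v = (u * v * u⁻¹) * u := by group
      _ = v * u := by rw [h3]
  · intro htop
    have : φ ∈ (MulAut.conj : H →* MulAut H).range := htop ▸ Subgroup.mem_top φ
    obtain ⟨h, hh⟩ := this
    exact φnotinner h hh
end

section
/- Let H be a Hall universal group. Then H is a simple group: H is nontrivial and its only normal subgroups are the trivial subgroup and H itself. -/
open scoped commutatorElement

lemma orderOf_mulSingle_div_mulSingle {ι M : Type*} [DecidableEq ι] [Group M]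
    {i j : ι} (hij : i ≠ j) (c : M) :
    orderOf (Pi.mulSingle i c / Pi.mulSingle j c : ι → M) = orderOf c := by
  rw [div_eq_mul_inv, ← Pi.mulSingle_inv]
  apply Nat.dvd_antisymm
  · apply orderOf_dvd_of_pow_eq_one
    rw [(Pi.mulSingle_commute (f := fun _ => M) hij c c⁻¹).mul_pow, ← Pi.mulSingle_pow,
      ← Pi.mulSingle_pow, inv_pow, pow_orderOf_eq_one, inv_one, Pi.mulSingle_one,
      Pi.mulSingle_one, mul_one]
  · have := orderOf_map_dvd (Pi.evalMonoidHom (fun _ => M) i)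
      (Pi.mulSingle i c * Pi.mulSingle j c⁻¹ : ι → M)
    rwa [Pi.evalMonoidHom_apply, Pi.mul_apply, Pi.mulSingle_eq_same,
      Pi.mulSingle_eq_of_ne hij, mul_one] at this

namespace RegularWreathProduct

variable {D Q : Type*} [Group D] [Group Q]

def baseHom : (Q → D) →* D ≀ᵣ Q where
  toFun f := ⟨f, 1⟩
  map_one' := rfl
  map_mul' _ _ := by ext <;> simp

lemma baseHom_injective : Function.Injective (baseHom : (Q → D) →* D ≀ᵣ Q) :=
  fun _ _ h => congrArg left h

lemma inl_injective : Function.Injective (inl : Q →* D ≀ᵣ Q) :=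
  fun _ _ h => congrArg right h

lemma commutatorElement_baseHom_inl (f : Q → D) (q : Q) :
    ⁅baseHom f, (inl q : D ≀ᵣ Q)⁆ = baseHom (f / fun x => f (q⁻¹ * x)) := by
  ext <;> simp [commutatorElement_def, baseHom, div_eq_mul_inv]

lemma exists_orderOf_eq_orderOf_mul_eq (c : D) {q : Q} (hq : q ≠ 1) :
    ∃ x y : D ≀ᵣ Q, orderOf x = orderOf q ∧ orderOf y = orderOf q ∧
      orderOf (x * y) = orderOf c := by
  classical
  set w : D ≀ᵣ Q := baseHom (Pi.mulSingle 1 c)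
  set z : D ≀ᵣ Q := inl q
  have hz : orderOf z = orderOf q := orderOf_injective inl inl_injective q
  have hshift : (fun x => (Pi.mulSingle 1 c : Q → D) (q⁻¹ * x)) = Pi.mulSingle q c := by
    funext x
    simp [Pi.mulSingle_apply, inv_mul_eq_one, eq_comm]
  refine ⟨w * z * w⁻¹, z⁻¹, ?_, by rw [orderOf_inv, hz], ?_⟩
  · rw [← (SemiconjBy.conj_mk w z).orderOf_eq, hz]
  · rw [← commutatorElement_def, commutatorElement_baseHom_inl, hshift,
      orderOf_injective (baseHom (D := D) (Q := Q)) baseHom_injective,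
      orderOf_mulSingle_div_mulSingle hq.symm]

end RegularWreathProduct

lemma exists_finite_group_orderOf_mul_eq {n m : ℕ} (hn : 2 ≤ n) (hm : 0 < m) :
    ∃ (G : Type) (_ : Group G) (_ : Finite G) (x y : G),
      orderOf x = n ∧ orderOf y = n ∧ orderOf (x * y) = m := by
  have : NeZero n := ⟨by omega⟩
  have : NeZero m := ⟨hm.ne'⟩
  have hgen : ∀ k, orderOf (Multiplicative.ofAdd (1 : ZMod k)) = k := fun k => by
    rw [orderOf_ofAdd_eq_addOrderOf, ZMod.addOrderOf_one]
  have hq : Multiplicative.ofAdd (1 : ZMod n) ≠ 1 := fun h => by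
    have := hgen n
    rw [h, orderOf_one] at this
    omega
  obtain ⟨x, y, hx, hy, hxy⟩ := RegularWreathProduct.exists_orderOf_eq_orderOf_mul_eq
    (Multiplicative.ofAdd (1 : ZMod m)) hq
  exact ⟨_, _, inferInstance, x, y, by rw [hx, hgen], by rw [hy, hgen], by rw [hxy, hgen]⟩

namespace IsHallUniversal

variable {H : Type*} [Group H]

lemma finite_zpowers (hH : IsHallUniversal H) (g : H) : Finite (Subgroup.zpowers g) :=
  hH.locallyFinite _ ⟨{g}, by simp [Subgroup.zpowers_eq_closure]⟩

lemma isOfFinOrder (hH : IsHallUniversal H) (g : H) : IsOfFinOrder g := by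
  have := hH.finite_zpowers g
  exact _root_.finite_zpowers.1 (Set.toFinite _)

lemma nontrivial (hH : IsHallUniversal H) : Nontrivial H := by
  obtain ⟨f, hf⟩ := hH.embedsFinite (Multiplicative (ZMod 2))
  exact hf.nontrivial

lemma exists_conj_mem_zpowers (hH : IsHallUniversal H) {c c' : H}
    (h : orderOf c' = orderOf c) : ∃ a ∈ Subgroup.zpowers c, ∃ k : H, k * a * k⁻¹ = c' := by
  have := hH.finite_zpowers c
  have := hH.finite_zpowers c'
  have hcard : Nat.card (Subgroup.zpowers c) = Nat.card (Subgroup.zpowers c') := by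
    rw [Nat.card_zpowers, Nat.card_zpowers, h]
  obtain ⟨k, hk⟩ := hH.conjIso _ _ inferInstance inferInstance ⟨mulEquivOfCyclicCardEq hcard⟩
  obtain ⟨a, ha, hac⟩ := Subgroup.mem_map.1 (hk ▸ Subgroup.mem_zpowers c')
  exact ⟨a, ha, k, hac⟩

lemma mem_of_orderOf_eq (hH : IsHallUniversal H) {N : Subgroup H} (hN : N.Normal) {c c' : H}
    (hc : c ∈ N) (h : orderOf c' = orderOf c) : c' ∈ N := by
  obtain ⟨a, ha, k, rfl⟩ := hH.exists_conj_mem_zpowers h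
  exact hN.conj_mem a (Subgroup.zpowers_le_of_mem hc ha) k

lemma exists_orderOf_mul_eq (hH : IsHallUniversal H) {n m : ℕ} (hn : 2 ≤ n) (hm : 0 < m) :
    ∃ x y : H, orderOf x = n ∧ orderOf y = n ∧ orderOf (x * y) = m := by
  obtain ⟨G, _, _, x, y, hx, hy, hxy⟩ := exists_finite_group_orderOf_mul_eq hn hm
  obtain ⟨f, hf⟩ := hH.embedsFinite G
  refine ⟨f x, f y, ?_, ?_, ?_⟩ <;>
    simp only [← map_mul, orderOf_injective f hf, *]

end IsHallUniversal

/-- **`H` is simple.**  A Hall universal group is nontrivial and its only normal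
subgroups are the trivial subgroup and the whole group. -/
theorem hallUniversal_simple
    (H : Type*) [Group H] (hH : IsHallUniversal H) :
    IsSimpleGroup H := by
  have := hH.nontrivial
  refine ⟨fun N hN => N.bot_or_exists_ne_one.imp_right fun ⟨a, haN, ha⟩ => ?_⟩
  refine (Subgroup.eq_top_iff' N).2 fun g => ?_
  have ha2 : 2 ≤ orderOf a := by
    have := (hH.isOfFinOrder a).orderOf_pos
    have : orderOf a ≠ 1 := mt orderOf_eq_one_iff.1 ha
    omega
  obtain ⟨x, y, hx, hy, hxy⟩ := hH.exists_orderOf_mul_eq ha2 (hH.isOfFinOrder g).orderOf_pos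
  have hxyN : x * y ∈ N :=
    N.mul_mem (hH.mem_of_orderOf_eq hN haN hx) (hH.mem_of_orderOf_eq hN haN hy)
  exact hH.mem_of_orderOf_eq hN hxyN hxy.symm
end

section
/- Let B be a finite group, let A be a subgroup of B, let α be an automorphism of A, and let β be an automorphism of B with β(A) = A such that α(β(x)) = β(α(x)) for all x ∈ A. Then there exist a finite group C, an injective group homomorphism e : B → C, and elements f, g ∈ C satisfying: (i) f g = g f; (ii) f · e(x) · f⁻¹ = e(α(x)) for all x ∈ A; (iii) g · e(y) · g⁻¹ = e(β(y)) for all y ∈ B. -/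
/-!
Let `K` be the finite group of pairs `(σ, τ) ∈ Aut B × Aut A` such that `σ` extends `τ` and `τ`
commutes with `α`; it contains `(β, β|_A)`. Then `A ⋊ K` embeds in `B ⋊ K`, and `α ⋊ id` is an
automorphism of `A ⋊ K` fixing `K`.

An automorphism `γ` of a subgroup `H` of a group `G` is induced, through the right regular
representation `G → Sym(G)`, by conjugation with the permutation `t h ↦ t γ(h)`, where `t` runs over
a set of representatives of the left cosets of `H`. Take `C = Sym(B ⋊ K)`, `f` this permutation
for `γ = α ⋊ id`, and `g` the image of `(β, β|_A)`; `f` and `g` commute because `γ` fixes `K`.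
-/

open QuotientGroup

section CosetTwist

variable {G : Type*} [Group G] {H : Subgroup G}

theorem QuotientGroup.out_inv_mul_mem (c : G) : (c : G ⧸ H).out⁻¹ * c ∈ H :=
  QuotientGroup.eq.mp (out_eq' (c : G ⧸ H))

noncomputable def cosetTwist (γ : H ≃* H) (c : G) : G :=
  (c : G ⧸ H).out * γ ⟨_, out_inv_mul_mem c⟩

theorem mk_cosetTwist (γ : H ≃* H) (c : G) : ((cosetTwist γ c : G) : G ⧸ H) = c := by
  rw [cosetTwist, mk_mul_of_mem _ (γ _).2, out_eq']

theorem cosetTwist_mul (γ : H ≃* H) (c : G) (x : H) :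
    cosetTwist γ (c * x) = cosetTwist γ c * γ x := by
  have hmk : ((c * x : G) : G ⧸ H) = c := mk_mul_of_mem c x.2
  have hx : (⟨_, out_inv_mul_mem (c * x)⟩ : H) = ⟨_, out_inv_mul_mem c⟩ * x :=
    Subtype.ext (by simp only [hmk, Subgroup.coe_mul, mul_assoc])
  rw [cosetTwist, cosetTwist, hx, map_mul, Subgroup.coe_mul, hmk, mul_assoc]

theorem cosetTwist_symm_cosetTwist (γ : H ≃* H) (c : G) :
    cosetTwist γ.symm (cosetTwist γ c) = c := by
  have hx : (⟨_, out_inv_mul_mem (cosetTwist γ c)⟩ : H) = γ ⟨_, out_inv_mul_mem c⟩ :=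
    Subtype.ext (by simp only [mk_cosetTwist]; rw [cosetTwist, inv_mul_cancel_left])
  rw [cosetTwist, hx, MulEquiv.symm_apply_apply, mk_cosetTwist, mul_inv_cancel_left]

noncomputable def cosetTwistPerm (γ : H ≃* H) : Equiv.Perm G where
  toFun := cosetTwist γ
  invFun := cosetTwist γ.symm
  left_inv := cosetTwist_symm_cosetTwist γ
  right_inv c := by simpa using cosetTwist_symm_cosetTwist γ.symm c

end CosetTwist

def rightRegular (G : Type*) [Group G] : G →* Equiv.Perm G where
  toFun y := Equiv.mulRight y⁻¹
  map_one' := by ext; simp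
  map_mul' _ _ := by ext; simp [mul_assoc]

theorem rightRegular_apply {G : Type*} [Group G] (y c : G) : rightRegular G y c = c * y⁻¹ := rfl

theorem rightRegular_injective (G : Type*) [Group G] : Function.Injective (rightRegular G) :=
  fun y z h => inv_injective (by simpa [rightRegular_apply] using congrArg (· 1) h)

theorem mul_rightRegular_eq {G : Type*} [Group G] {σ : Equiv.Perm G} {x y : G}
    (h : ∀ c, σ (c * x) = σ c * y) : σ * rightRegular G x = rightRegular G y * σ := by
  ext c
  simp only [Equiv.Perm.mul_apply, rightRegular_apply]
  rw [eq_mul_inv_iff_mul_eq, ← h, inv_mul_cancel_right]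

theorem exists_perm_conj_rightRegular_eq {H G : Type*} [Group H] [Group G] {ι : H →* G}
    (hι : Function.Injective ι) (γ : H ≃* H) :
    ∃ σ : Equiv.Perm G, ∀ x : H, σ * rightRegular G (ι x) * σ⁻¹ = rightRegular G (ι (γ x)) := by
  let e := MonoidHom.ofInjective hι
  refine ⟨cosetTwistPerm (e.symm.trans (γ.trans e)), fun x => ?_⟩
  rw [mul_inv_eq_iff_eq_mul]
  refine mul_rightRegular_eq fun c => ?_
  show cosetTwist _ (c * ι x) = cosetTwist _ c * ι (γ x)
  simpa [e, MonoidHom.ofInjective_apply] using cosetTwist_mul (e.symm.trans (γ.trans e)) c (e x)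

instance SemidirectProduct.instFinite {N K : Type*} [Group N] [Group K] [Finite N] [Finite K]
    {φ : K →* MulAut N} : Finite (N ⋊[φ] K) :=
  Finite.of_equiv _ SemidirectProduct.equivProd.symm

theorem SemidirectProduct.map_injective_s13 {N₁ G₁ N₂ G₂ : Type*} [Group N₁] [Group G₁] [Group N₂]
    [Group G₂] {φ₁ : G₁ →* MulAut N₁} {φ₂ : G₂ →* MulAut N₂} {fn : N₁ →* N₂} {fg : G₁ →* G₂}
    (hn : Function.Injective fn) (hg : Function.Injective fg)
    (h : ∀ g : G₁, fn.comp (φ₁ g).toMonoidHom = (φ₂ (fg g)).toMonoidHom.comp fn) :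
    Function.Injective (map fn fg h) :=
  fun _ _ hxy => SemidirectProduct.ext (hn (congrArg left hxy)) (hg (congrArg right hxy))

section SemidirectProductCongr

variable {N₁ G₁ N₂ G₂ : Type*} [Group N₁] [Group G₁] [Group N₂] [Group G₂]
  {φ₁ : G₁ →* MulAut N₁} {φ₂ : G₂ →* MulAut N₂} (fn : N₁ ≃* N₂) (fg : G₁ ≃* G₂)
  (h : ∀ g : G₁, (φ₁ g).trans fn = fn.trans (φ₂ (fg g)))

@[simp]
theorem SemidirectProduct.congr_inl (n : N₁) :
    SemidirectProduct.congr fn fg h (inl n) = inl (fn n) := by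
  ext <;> simp

@[simp]
theorem SemidirectProduct.congr_inr (g : G₁) :
    SemidirectProduct.congr fn fg h (inr g) = inr (fg g) := by
  ext <;> simp

end SemidirectProductCongr

def compatibleAutPairs {B : Type*} [Group B] (A : Subgroup B) (α : MulAut A) :
    Subgroup (MulAut B × MulAut A) where
  carrier := {p | (∀ a : A, p.1 a = p.2 a) ∧ Commute p.2 α}
  one_mem' := ⟨fun _ => rfl, Commute.one_left α⟩
  mul_mem' {p q} hp hq := ⟨fun a => by simp [hq.1, hp.1], hp.2.mul_left hq.2⟩
  inv_mem' {p} hp := ⟨fun a => p.1.injective (by simp [hp.1]), hp.2.inv_left⟩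

theorem exists_realization_of_mem_compatibleAutPairs {B : Type} [Group B] [Finite B]
    {A : Subgroup B} {α : MulAut A} {β : MulAut B} {β' : MulAut A}
    (hβ : (β, β') ∈ compatibleAutPairs A α) :
    ∃ (C : Type) (_ : Group C) (_ : Finite C) (e : B →* C) (f g : C),
      f * g = g * f ∧
      (∀ x : A, f * e (x : B) * f⁻¹ = e (α x)) ∧
      (∀ y : B, g * e y * g⁻¹ = e (β y)) ∧
      Function.Injective e := by
  let K := compatibleAutPairs A α
  let κ : K := ⟨(β, β'), hβ⟩
  let φ : K →* MulAut B := (MonoidHom.fst _ _).comp K.subtype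
  let ψ : K →* MulAut A := (MonoidHom.snd _ _).comp K.subtype
  have hφψ : ∀ k, A.subtype.comp (ψ k).toMonoidHom = (φ k).toMonoidHom.comp A.subtype :=
    fun k => MonoidHom.ext fun a => (k.2.1 a).symm
  have hψα : ∀ k, (ψ k).trans α = α.trans (ψ k) := fun k => k.2.2.eq.symm
  let ι := SemidirectProduct.map A.subtype (MonoidHom.id K) hφψ
  let γ := SemidirectProduct.congr α (MulEquiv.refl K) hψα
  have hι : Function.Injective ι :=
    SemidirectProduct.map_injective_s13 A.subtype_injective Function.injective_id hφψ
  obtain ⟨σ, hσ⟩ := exists_perm_conj_rightRegular_eq hι γ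
  let ρ := rightRegular (B ⋊[φ] K)
  refine ⟨Equiv.Perm (B ⋊[φ] K), inferInstance, inferInstance, ρ.comp SemidirectProduct.inl, σ,
    ρ (SemidirectProduct.inr κ), ?_, fun x => ?_, fun y => ?_,
    (rightRegular_injective _).comp SemidirectProduct.inl_injective⟩
  · have hκ : γ (SemidirectProduct.inr κ) = SemidirectProduct.inr κ :=
      SemidirectProduct.congr_inr _ _ _ κ
    simpa [hκ, ι, mul_inv_eq_iff_eq_mul] using hσ (SemidirectProduct.inr κ)
  · have hx : γ (SemidirectProduct.inl x) = SemidirectProduct.inl (α x) :=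
      SemidirectProduct.congr_inl _ _ _ x
    simpa [hx, ι] using hσ (SemidirectProduct.inl x)
  · simp only [MonoidHom.comp_apply, ← map_inv, ← map_mul, ← SemidirectProduct.inl_aut]
    rfl

/-- Let `A ≤ B` be finite groups, `α` an automorphism of `A` and `β` an automorphism of
`B` leaving `A` invariant, such that `α(β(x)) = β(α(x))` for all `x ∈ A`.  Then there
exist a finite group `C`, an embedding `e : B → C`, and commuting elements `f, g ∈ C`
such that conjugation by `f` realizes `α` on `e(A)` and conjugation by `g` realizes `β`
on `e(B)`. -/
theorem commuting_realization_of_commuting_automorphisms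
    (B : Type) [Group B] [Finite B] (A : Subgroup B)
    (α : MulAut A) (β : MulAut B)
    (hβA : Subgroup.map β.toMonoidHom A = A)
    (hcomm : ∀ x : A, ∀ hx : β (x : B) ∈ A, (α ⟨β (x : B), hx⟩ : B) = β (α x)) :
    ∃ (C : Type) (_ : Group C) (_ : Finite C) (e : B →* C) (f g : C),
      f * g = g * f ∧
      (∀ x : A, f * e (x : B) * f⁻¹ = e (α x)) ∧
      (∀ y : B, g * e y * g⁻¹ = e (β y)) ∧
      Function.Injective e := by
  let β' : MulAut A := ((β : B ≃* B).subgroupMap A).trans (MulEquiv.subgroupCongr hβA)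
  exact exists_realization_of_mem_compatibleAutPairs (β' := β')
    ⟨fun _ => rfl, MulEquiv.ext fun a => Subtype.ext (hcomm a _).symm⟩
end

section
/- Let H be a Hall universal group and let g ∈ Aut(H) be a generic automorphism, i.e., the conjugacy class { f g f⁻¹ : f ∈ Aut(H) } is comeager in Aut(H). Then g has roots of all orders: for every integer n ≥ 1 there exists h ∈ Aut(H) with hⁿ = g. -/
open Function

section Helpers
universe u v
variable {H : Type u} [Group H]

lemma finClosure (hH : IsHallUniversal H) (S : Set H) (hS : S.Finite) :
    Finite (Subgroup.closure S) :=
  hH.locallyFinite _ ((Subgroup.fg_iff _).2 ⟨S, rfl, hS⟩)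

lemma embeds' (hH : IsHallUniversal H) (G : Type v) [Group G] [Finite G] :
    ∃ f : G →* H, Function.Injective f := by
  haveI : Small.{0} G := Countable.toSmall G
  haveI : Finite (Shrink.{0} G) := Finite.of_equiv G (equivShrink G)
  obtain ⟨f, hf⟩ := hH.embedsFinite (Shrink.{0} G)
  let e : G ≃* Shrink.{0} G := ⟨equivShrink G, by simp⟩
  exact ⟨f.comp e.toMonoidHom, hf.comp e.injective⟩

/-- conjugation as an equiv between two subgroups -/
noncomputable def conjEquiv (h : H) (P Q : Subgroup H)
    (h1 : ∀ p ∈ P, h * p * h⁻¹ ∈ Q) (h2 : ∀ q ∈ Q, h⁻¹ * q * h ∈ P) :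
    ↥P ≃* ↥Q where
  toFun p := ⟨h * ↑p * h⁻¹, h1 _ p.2⟩
  invFun q := ⟨h⁻¹ * ↑q * h, h2 _ q.2⟩
  left_inv p := by ext; simp [mul_assoc]
  right_inv q := by ext; simp [mul_assoc]
  map_mul' p q := by ext; simp [mul_assoc]

@[simp] lemma conjEquiv_apply (h : H) (P Q : Subgroup H) (h1) (h2) (p : ↥P) :
    ↑(conjEquiv h P Q h1 h2 p) = h * ↑p * h⁻¹ := rfl

end Helpers
section Homog
universe u
variable {H : Type u} [Group H]

instance sdpFinite (N G : Type*) [Group N] [Group G] [Finite N] [Finite G]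
    (φ : G →* MulAut N) : Finite (SemidirectProduct N G φ) :=
  Finite.of_injective (fun a => (a.left, a.right))
    (fun a b hab => by
      cases a; cases b
      simp only [Prod.mk.injEq] at hab
      simp [hab.1, hab.2])

instance mulAutFinite (A : Type*) [Group A] [Finite A] : Finite (MulAut A) :=
  Finite.of_injective (fun (α : MulAut A) => (α : A → A)) DFunLike.coe_injective

/-- Every injective homomorphism from a finite subgroup into `H` is realized by
conjugation. -/
lemma hom_realize (hH : IsHallUniversal H) (A : Subgroup H) [Finite ↥A]
    (ψ : ↥A →* H) (hψ : Function.Injective ψ) :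
    ∃ c : H, ∀ a : ↥A, ψ a = c * ↑a * c⁻¹ := by
  classical
  -- Part 1 : a copy A₁ of A on which all automorphisms are realized
  set G₀ := SemidirectProduct ↥A (MulAut ↥A) (MonoidHom.id _) with hG₀
  obtain ⟨f, hf⟩ := embeds' hH G₀
  set ι : ↥A →* H := f.comp SemidirectProduct.inl with hιdef
  have hι : Function.Injective ι := hf.comp SemidirectProduct.inl_injective
  set A₁ := ι.range with hA₁
  haveI : Finite ↥A₁ := Finite.of_equiv _ (MonoidHom.ofInjective hι).toEquiv
  have key : ∀ (α : MulAut ↥A) (a : ↥A),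
      f (SemidirectProduct.inr α) * ι a * (f (SemidirectProduct.inr α))⁻¹ = ι (α a) := by
    intro α a
    have h1 : (SemidirectProduct.inl (α a) : G₀)
        = SemidirectProduct.inr α * SemidirectProduct.inl a * SemidirectProduct.inr α⁻¹ :=
      SemidirectProduct.inl_aut (φ := MonoidHom.id _) α a
    have : ι (α a) = f (SemidirectProduct.inr α * SemidirectProduct.inl a
        * SemidirectProduct.inr α⁻¹) := by
      rw [hιdef]; simp only [MonoidHom.comp_apply]; rw [h1]
    rw [this]
    simp only [map_mul, map_inv, MonoidHom.comp_apply, hιdef]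
  -- conjugate A₁ onto A
  obtain ⟨h₁, hmap₁⟩ := hH.conjIso A₁ A inferInstance inferInstance
    ⟨(MonoidHom.ofInjective hι).symm⟩
  have fwd₁ : ∀ p ∈ A₁, h₁ * p * h₁⁻¹ ∈ A := by
    intro p hp
    rw [← hmap₁]
    exact ⟨p, hp, by simp⟩
  have bwd₁ : ∀ a ∈ A, h₁⁻¹ * a * h₁ ∈ A₁ := by
    intro a ha
    rw [← hmap₁] at ha
    obtain ⟨p, hp, he⟩ := ha
    simp only [MulEquiv.coe_toMonoidHom, MulAut.conj_apply] at he
    have : h₁⁻¹ * a * h₁ = p := by rw [← he]; group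
    rw [this]; exact hp
  let ρ : ↥A ≃* ↥A₁ := conjEquiv h₁⁻¹ A A₁
    (by intro p hp; rw [inv_inv]; exact bwd₁ p hp)
    (by intro q hq; rw [inv_inv]; exact fwd₁ q hq)
  let e : ↥A ≃* ↥A₁ := MonoidHom.ofInjective hι
  let ν : ↥A ≃* ↥A := ρ.trans e.symm
  have hν : ∀ a : ↥A, ι (ν a) = h₁⁻¹ * ↑a * h₁ := by
    intro a
    have h2 : ι (e.symm (ρ a)) = ↑(ρ a) := MonoidHom.apply_ofInjective_symm hι (ρ a)
    have h3 : (↑(ρ a) : H) = h₁⁻¹ * ↑a * (h₁⁻¹)⁻¹ := rfl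
    rw [show ν a = e.symm (ρ a) from rfl, h2, h3, inv_inv]
  -- Part 2 : conjugate A onto the range of ψ
  set B := ψ.range with hB
  haveI : Finite ↥B := Finite.of_equiv _ (MonoidHom.ofInjective hψ).toEquiv
  obtain ⟨h₂, hmap₂⟩ := hH.conjIso A B inferInstance inferInstance
    ⟨MonoidHom.ofInjective hψ⟩
  have fwd₂ : ∀ a ∈ A, h₂ * a * h₂⁻¹ ∈ B := by
    intro a ha; rw [← hmap₂]; exact ⟨a, ha, by simp⟩
  have bwd₂ : ∀ b ∈ B, h₂⁻¹ * b * h₂ ∈ A := by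
    intro b hb
    rw [← hmap₂] at hb
    obtain ⟨p, hp, he⟩ := hb
    simp only [MulEquiv.coe_toMonoidHom, MulAut.conj_apply] at he
    have : h₂⁻¹ * b * h₂ = p := by rw [← he]; group
    rw [this]; exact hp
  let τ : ↥A ≃* ↥A := (MonoidHom.ofInjective hψ).trans (conjEquiv h₂⁻¹ B A
    (by intro p hp; rw [inv_inv]; exact bwd₂ p hp)
    (by intro q hq; rw [inv_inv]; exact fwd₂ q hq))
  have hτ : ∀ a : ↥A, (↑(τ a) : H) = h₂⁻¹ * (ψ a) * h₂ := by
    intro a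
    have : (↑(τ a) : H) = h₂⁻¹ * ↑(MonoidHom.ofInjective hψ a) * (h₂⁻¹)⁻¹ := rfl
    rw [this, inv_inv, MonoidHom.ofInjective_apply]
  -- realize τ by conjugation
  let α'' : MulAut ↥A := ν.symm.trans (τ.trans ν)
  set t := f (SemidirectProduct.inr α'') with ht
  set c₀ := h₁ * t * h₁⁻¹ with hc₀def
  have hc₀ : ∀ a : ↥A, c₀ * ↑a * c₀⁻¹ = ↑(τ a) := by
    intro a
    have e1 : c₀ * ↑a * c₀⁻¹ = h₁ * (t * (h₁⁻¹ * ↑a * h₁) * t⁻¹) * h₁⁻¹ := by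
      rw [hc₀def]; group
    rw [e1, ← hν a, key α'' (ν a)]
    have e2 : α'' (ν a) = ν (τ a) := by
      show (ν.symm.trans (τ.trans ν)) (ν a) = ν (τ a)
      simp [MulEquiv.trans_apply]
    rw [e2, hν (τ a)]
    group
  refine ⟨h₂ * c₀, fun a => ?_⟩
  have := hτ a
  have e3 : ψ a = h₂ * ↑(τ a) * h₂⁻¹ := by rw [this]; group
  rw [e3, ← hc₀ a]
  group

end Homog
section RootExt
universe u
variable {K : Type u} [Group K]

/-- the twisted sequence of "multipliers" -/
def kseq (n : ℕ) (x c : K) (t : ℕ) : K :=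
  c ^ (t / n) * (if t % n = 0 then (x ^ (n - 1))⁻¹ * c else x) * (c ^ (t / n))⁻¹

/-- descending window products of `kseq` -/
def wprod (n : ℕ) (x c : K) : ℕ → ℕ → K
  | 0, _ => 1
  | t + 1, v => kseq n x c (v + t) * wprod n x c t v

variable (n : ℕ) (x c : K)

lemma kseq_per (hn : 0 < n) (t : ℕ) : kseq n x c (t + n * orderOf c) = kseq n x c t := by
  unfold kseq
  rw [Nat.add_mul_div_left _ _ hn, Nat.add_mul_mod_self_left, pow_add, pow_orderOf_eq_one,
    mul_one]

lemma kseq_add_mul (hn : 0 < n) (t q : ℕ) :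
    kseq n x c (t + n * orderOf c * q) = kseq n x c t := by
  induction q with
  | zero => rfl
  | succ q ih =>
    have : t + n * orderOf c * (q + 1) = (t + n * orderOf c * q) + n * orderOf c := by ring
    rw [this, kseq_per n x c hn, ih]

lemma kseq_mod (hn : 0 < n) (t : ℕ) :
    kseq n x c (t % (n * orderOf c)) = kseq n x c t := by
  conv_rhs => rw [← Nat.mod_add_div t (n * orderOf c)]
  rw [kseq_add_mul n x c hn]

lemma kseq_step (hn : 0 < n) (t : ℕ) :
    kseq n x c (t + n) = c * kseq n x c t * c⁻¹ := by
  unfold kseq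
  rw [Nat.add_div_right _ hn, Nat.add_mod_right, pow_succ']
  group

lemma kseq_base (r : ℕ) (h1 : 1 ≤ r) (hr : r < n) : kseq n x c r = x := by
  unfold kseq
  rw [Nat.div_eq_of_lt hr, Nat.mod_eq_of_lt hr, if_neg (by omega)]
  simp

lemma kseq_zero : kseq n x c 0 = (x ^ (n - 1))⁻¹ * c := by
  unfold kseq
  simp

lemma wprod_succ (t v : ℕ) : wprod n x c (t + 1) v = kseq n x c (v + t) * wprod n x c t v :=
  rfl

lemma wprod_shift (t v : ℕ) :
    wprod n x c (t + 1) v = wprod n x c t (v + 1) * kseq n x c v := by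
  induction t generalizing v with
  | zero => simp [wprod]
  | succ t ih =>
    have e : wprod n x c (t + 1 + 1) v
        = kseq n x c (v + (t + 1)) * (wprod n x c t (v + 1) * kseq n x c v) := by
      rw [wprod_succ, ih]
    rw [e, wprod_succ n x c t (v + 1), show v + (t + 1) = (v + 1) + t by ring, mul_assoc]

lemma wprod_le_n (hn : 1 ≤ n) (t : ℕ) (h1 : 1 ≤ t) (ht : t ≤ n) :
    wprod n x c t 0 = x ^ (t - 1) * ((x ^ (n - 1))⁻¹ * c) := by
  induction t with
  | zero => omega
  | succ t ih =>
    rcases Nat.eq_zero_or_pos t with h | h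
    · subst h
      simp [wprod, kseq_zero]
    · have hx : x ^ t = x * x ^ (t - 1) := by
        conv_lhs => rw [show t = (t - 1) + 1 by omega]
        rw [pow_succ']
      rw [wprod_succ, zero_add, ih h (by omega), kseq_base n x c t h (by omega),
        Nat.add_sub_cancel, hx, mul_assoc]

lemma wprod_n_zero (hn : 1 ≤ n) : wprod n x c n 0 = c := by
  rw [wprod_le_n n x c hn n hn le_rfl]
  group

lemma wprod_n (hn : 1 ≤ n) (v : ℕ) : wprod n x c n v = c := by
  induction v with
  | zero => exact wprod_n_zero n x c hn
  | succ v ih =>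
    have h1 : wprod n x c (n + 1) v = kseq n x c (v + n) * wprod n x c n v := wprod_succ _ _ _ _ _
    have h2 : wprod n x c (n + 1) v = wprod n x c n (v + 1) * kseq n x c v := wprod_shift _ _ _ _ _
    have h3 : wprod n x c n (v + 1) * kseq n x c v = kseq n x c (v + n) * wprod n x c n v := by
      rw [← h2, h1]
    rw [ih, kseq_step n x c (by omega)] at h3
    have : wprod n x c n (v + 1) = (c * kseq n x c v * c⁻¹ * c) * (kseq n x c v)⁻¹ := by
      rw [eq_mul_inv_iff_mul_eq]
      exact h3
    rw [this]
    group

section ConjLemmas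
variable (A : Subgroup K) (hn : 1 ≤ n) (hxA : x ∈ A)
  (hconj : ∀ a ∈ A, c * a * c⁻¹ = x ^ n * a * (x ^ n)⁻¹)

include hn hxA hconj

lemma cpow_conj : ∀ (j : ℕ), ∀ a ∈ A, c ^ j * a * (c ^ j)⁻¹ = x ^ (n * j) * a * (x ^ (n * j))⁻¹ := by
  intro j
  induction j with
  | zero => intro a _; simp
  | succ j ih =>
    intro a ha
    have ha' : x ^ (n * j) * a * (x ^ (n * j))⁻¹ ∈ A :=
      A.mul_mem (A.mul_mem (A.pow_mem hxA _) ha) (A.inv_mem (A.pow_mem hxA _))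
    have e1 : c ^ (j + 1) * a * (c ^ (j + 1))⁻¹ = c * (c ^ j * a * (c ^ j)⁻¹) * c⁻¹ := by
      rw [pow_succ']; group
    rw [e1, ih a ha, hconj _ ha', show n * (j + 1) = n + n * j by ring, pow_add]
    group

lemma cpow_conj_inv : ∀ (j : ℕ), ∀ a ∈ A,
    (c ^ j)⁻¹ * a * c ^ j = (x ^ (n * j))⁻¹ * a * x ^ (n * j) := by
  intro j a ha
  have ha' : (x ^ (n * j))⁻¹ * a * x ^ (n * j) ∈ A :=
    A.mul_mem (A.mul_mem (A.inv_mem (A.pow_mem hxA _)) ha) (A.pow_mem hxA _)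
  have h1 := cpow_conj n x c A hn hxA hconj j _ ha'
  have h2 : c ^ j * ((x ^ (n * j))⁻¹ * a * x ^ (n * j)) * (c ^ j)⁻¹ = a := by
    rw [h1]; group
  calc (c ^ j)⁻¹ * a * c ^ j
      = (c ^ j)⁻¹ * (c ^ j * ((x ^ (n * j))⁻¹ * a * x ^ (n * j)) * (c ^ j)⁻¹) * c ^ j := by
        rw [h2]
    _ = (x ^ (n * j))⁻¹ * a * x ^ (n * j) := by group

lemma kseq_conj : ∀ (t : ℕ), ∀ a ∈ A, kseq n x c t * a * (kseq n x c t)⁻¹ = x * a * x⁻¹ := by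
  intro t a ha
  set j := t / n with hj
  set b := if t % n = 0 then (x ^ (n - 1))⁻¹ * c else x with hb
  have hkt : kseq n x c t = c ^ j * b * (c ^ j)⁻¹ := rfl
  set a' := (x ^ (n * j))⁻¹ * a * x ^ (n * j) with ha'def
  have ha' : a' ∈ A :=
    A.mul_mem (A.mul_mem (A.inv_mem (A.pow_mem hxA _)) ha) (A.pow_mem hxA _)
  have hinner : (c ^ j)⁻¹ * a * c ^ j = a' := cpow_conj_inv n x c A hn hxA hconj j a ha
  have hbconj : b * a' * b⁻¹ = x * a' * x⁻¹ := by
    rw [hb]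
    split_ifs with h
    · have hxn : x ^ n = x ^ (n - 1) * x := by
        conv_lhs => rw [show n = (n - 1) + 1 by omega]
        rw [pow_succ]
      have e1 : (x ^ (n - 1))⁻¹ * c * a' * ((x ^ (n - 1))⁻¹ * c)⁻¹
          = (x ^ (n - 1))⁻¹ * (c * a' * c⁻¹) * x ^ (n - 1) := by group
      rw [e1, hconj _ ha', hxn]
      group
    · rfl
  have ha'' : x * a' * x⁻¹ ∈ A := A.mul_mem (A.mul_mem hxA ha') (A.inv_mem hxA)
  have houter : c ^ j * (x * a' * x⁻¹) * (c ^ j)⁻¹ = x ^ (n * j) * (x * a' * x⁻¹) * (x ^ (n * j))⁻¹ :=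
    cpow_conj n x c A hn hxA hconj j _ ha''
  have e2 : kseq n x c t * a * (kseq n x c t)⁻¹
      = c ^ j * (b * ((c ^ j)⁻¹ * a * c ^ j) * b⁻¹) * (c ^ j)⁻¹ := by
    rw [hkt]; group
  rw [e2, hinner, hbconj, houter, ha'def]
  group

end ConjLemmas
end RootExt
section RootExt2
universe u
variable {K : Type u} [Group K]

/-- left multiplication embedding into permutations of `K × ZMod M` -/
def permL (M : ℕ) : K →* Equiv.Perm (K × ZMod M) where
  toFun g := Equiv.prodCongr (Equiv.mulLeft g) (Equiv.refl _)
  map_one' := by ext p <;> simp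
  map_mul' g g' := by ext p <;> simp [mul_assoc]

@[simp] lemma permL_apply (M : ℕ) (g : K) (p : K × ZMod M) :
    permL M g p = (g * p.1, p.2) := rfl

lemma permL_injective (M : ℕ) : Function.Injective (permL M : K →* Equiv.Perm (K × ZMod M)) := by
  intro a b hab
  have := congrArg (fun (σ : Equiv.Perm (K × ZMod M)) => (σ (1, 0)).1) hab
  simpa using this

variable (n : ℕ) (x c : K)

/-- the root permutation -/
def rootPerm (M : ℕ) [NeZero M] : Equiv.Perm (K × ZMod M) where
  toFun p := (kseq n x c p.2.val * p.1, p.2 + 1)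
  invFun p := ((kseq n x c (p.2 - 1).val)⁻¹ * p.1, p.2 - 1)
  left_inv p := by
    obtain ⟨g, i⟩ := p
    simp [mul_assoc]
  right_inv p := by
    obtain ⟨g, i⟩ := p
    simp [mul_assoc]

@[simp] lemma rootPerm_apply (M : ℕ) [NeZero M] (p : K × ZMod M) :
    rootPerm n x c M p = (kseq n x c p.2.val * p.1, p.2 + 1) := rfl

lemma rootPerm_pow (hn : 0 < n) (M : ℕ) [NeZero M] (hM : M = n * orderOf c)
    (t : ℕ) (g : K) (v : ℕ) :
    ((rootPerm n x c M) ^ t) (g, (v : ZMod M))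
      = (wprod n x c t v * g, ((v + t : ℕ) : ZMod M)) := by
  induction t with
  | zero => simp [wprod]
  | succ t ih =>
    rw [pow_succ', Equiv.Perm.mul_apply, ih, rootPerm_apply]
    have hval : kseq n x c (((v + t : ℕ) : ZMod M)).val = kseq n x c (v + t) := by
      rw [ZMod.val_natCast, hM, kseq_mod n x c hn]
    rw [hval]
    refine Prod.ext ?_ ?_
    · show kseq n x c (v + t) * (wprod n x c t v * g) = wprod n x c (t + 1) v * g
      rw [wprod_succ, mul_assoc]
    · show ((v + t : ℕ) : ZMod M) + 1 = ((v + (t + 1) : ℕ) : ZMod M)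
      push_cast
      ring

lemma rootPerm_pow_n [Finite K] (hn : 1 ≤ n) (M : ℕ) [NeZero M] (hM : M = n * orderOf c)
    (p : K × ZMod M) :
    ((rootPerm n x c M) ^ n) p = (c * p.1, p.2 + n) := by
  obtain ⟨g, i⟩ := p
  have hi : ((i.val : ℕ) : ZMod M) = i := ZMod.natCast_rightInverse i
  have := rootPerm_pow n x c (by omega) M hM n g i.val
  rw [hi] at this
  rw [this, wprod_n n x c hn]
  refine Prod.ext rfl ?_
  show ((i.val + n : ℕ) : ZMod M) = i + n
  push_cast
  rw [hi]

/-- The abstract root-extension lemma : a finite group `K` with a subgroup `A`,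
an element `x ∈ A` and an element `c` whose conjugation agrees with `xⁿ` on `A`
embeds into a finite group containing an `n`-th root of (an extension of) `c`
compatible with `x` on `A`. -/
lemma root_ext [Finite K] (hn : 1 ≤ n) (A : Subgroup K) (hxA : x ∈ A)
    (hconj : ∀ a ∈ A, c * a * c⁻¹ = x ^ n * a * (x ^ n)⁻¹) :
    ∃ (L : Type u) (_i : Group L) (_f : Finite L) (j : K →* L) (s : L),
      Function.Injective j ∧ (∀ a ∈ A, s * j a * s⁻¹ = j (x * a * x⁻¹)) ∧
      ∀ b : K, s ^ n * j b * (s ^ n)⁻¹ = j (c * b * c⁻¹) := by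
  set M := n * orderOf c with hM
  haveI : NeZero M := ⟨Nat.mul_ne_zero (by omega) (orderOf_pos c).ne'⟩
  refine ⟨Equiv.Perm (K × ZMod M), inferInstance, inferInstance, permL M,
    rootPerm n x c M, permL_injective M, ?_, ?_⟩
  · intro a ha
    have key : rootPerm n x c M * permL M a = permL M (x * a * x⁻¹) * rootPerm n x c M := by
      apply Equiv.ext
      rintro ⟨g, i⟩
      simp only [Equiv.Perm.mul_apply, permL_apply, rootPerm_apply]
      refine Prod.ext ?_ rfl
      show kseq n x c i.val * (a * g) = (x * a * x⁻¹) * (kseq n x c i.val * g)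
      have := kseq_conj n x c A hn hxA hconj i.val a ha
      calc kseq n x c i.val * (a * g)
          = (kseq n x c i.val * a * (kseq n x c i.val)⁻¹) * (kseq n x c i.val * g) := by group
        _ = (x * a * x⁻¹) * (kseq n x c i.val * g) := by rw [this]
    rw [key]
    group
  · intro b
    have key : (rootPerm n x c M) ^ n * permL M b
        = permL M (c * b * c⁻¹) * (rootPerm n x c M) ^ n := by
      apply Equiv.ext
      rintro ⟨g, i⟩
      simp only [Equiv.Perm.mul_apply, permL_apply]
      rw [rootPerm_pow_n n x c hn M hM, rootPerm_pow_n n x c hn M hM]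
      refine Prod.ext ?_ rfl
      show c * (b * g) = (c * b * c⁻¹) * (c * g)
      group
    rw [key]
    group

end RootExt2
section ExtStep
universe u
variable {H : Type u} [Group H]

lemma realize_over (hH : IsHallUniversal H) (K : Subgroup H) [Finite ↥K]
    {L : Type u} [Group L] [Finite L] (j : ↥K →* L) (hj : Function.Injective j) :
    ∃ g : L →* H, Function.Injective g ∧ ∀ k : ↥K, g (j k) = ↑k := by
  obtain ⟨f, hf⟩ := embeds' hH L
  obtain ⟨c, hc⟩ := hom_realize hH K (f.comp j) (hf.comp hj)
  refine ⟨(MulAut.conj c).symm.toMonoidHom.comp f, (MulAut.conj c).symm.injective.comp hf, ?_⟩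
  intro k
  have h1 : f (j k) = c * ↑k * c⁻¹ := hc k
  simp only [MonoidHom.comp_apply, h1, MulEquiv.coe_toMonoidHom, MulAut.conj_symm_apply]
  group

lemma ext_step (hH : IsHallUniversal H) (n : ℕ) (hn : 1 ≤ n)
    (A : Subgroup H) (hAfin : Finite ↥A) (x : H) (hx : x ∈ A)
    (y₀ : MulAut H) (hy : ∀ a ∈ A, y₀ a = x ^ n * a * (x ^ n)⁻¹)
    (F : Finset H) :
    ∃ (A' : Subgroup H) (x' : H), Finite ↥A' ∧ x' ∈ A' ∧ A ≤ A' ∧ (↑F : Set H) ⊆ ↑A' ∧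
      (∀ a ∈ A, x' * a * x'⁻¹ = x * a * x⁻¹) ∧
      (∀ a ∈ F, x' ^ n * a * (x' ^ n)⁻¹ = y₀ a) := by
  classical
  -- enlarge to B = ⟨A ∪ F⟩
  set B := Subgroup.closure ((A : Set H) ∪ ↑F) with hBdef
  haveI hBfin : Finite ↥B := finClosure hH _ ((Set.toFinite _).union F.finite_toSet)
  have hAB : A ≤ B := fun a ha => Subgroup.subset_closure (Or.inl ha)
  have hFB : (↑F : Set H) ⊆ ↑B := fun a ha => Subgroup.subset_closure (Or.inr ha)
  -- realize y₀ on B by conjugation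
  obtain ⟨c, hc⟩ := hom_realize hH B (y₀.toMonoidHom.comp B.subtype)
    (y₀.injective.comp B.subtype_injective)
  have hc' : ∀ b ∈ B, y₀ b = c * b * c⁻¹ := fun b hb => hc ⟨b, hb⟩
  -- enlarge to K = ⟨B ∪ {c}⟩
  set K := Subgroup.closure ((B : Set H) ∪ {c}) with hKdef
  haveI hKfin : Finite ↥K := finClosure hH _ ((Set.toFinite _).union (Set.finite_singleton c))
  have hBK : B ≤ K := fun b hb => Subgroup.subset_closure (Or.inl hb)
  have hcK : c ∈ K := Subgroup.subset_closure (Or.inr rfl)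
  have hAK : A ≤ K := le_trans hAB hBK
  have hxK : x ∈ K := hAK hx
  -- abstract data inside K
  set Abar : Subgroup ↥K := A.subgroupOf K with hAbar
  set xbar : ↥K := ⟨x, hxK⟩ with hxbar
  set cbar : ↥K := ⟨c, hcK⟩ with hcbar
  have hxbarA : xbar ∈ Abar := by
    rw [hAbar, Subgroup.mem_subgroupOf]; exact hx
  have hconj : ∀ a ∈ Abar, cbar * a * cbar⁻¹ = xbar ^ n * a * (xbar ^ n)⁻¹ := by
    intro a ha
    rw [Subgroup.mem_subgroupOf] at ha
    ext
    push_cast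
    rw [← hc' ↑a (hAB ha), hy ↑a ha]
  obtain ⟨L, _iL, _fL, j, s, hj, hs1, hs2⟩ := root_ext n xbar cbar hn Abar hxbarA hconj
  obtain ⟨g, hg, hgk⟩ := realize_over hH K j hj
  set s' := g s with hs'
  -- the new pair
  refine ⟨Subgroup.closure ((K : Set H) ∪ {s'}), s',
    finClosure hH _ ((Set.toFinite _).union (Set.finite_singleton s')), 
    Subgroup.subset_closure (Or.inr rfl), ?_, ?_, ?_, ?_⟩
  · exact fun a ha => Subgroup.subset_closure (Or.inl (hAK ha))
  · exact fun a ha => Subgroup.subset_closure (Or.inl (hBK (hFB ha)))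
  · intro a ha
    set abar : ↥K := ⟨a, hAK ha⟩ with habar
    have hmem : abar ∈ Abar := by rw [hAbar, Subgroup.mem_subgroupOf]; exact ha
    have e1 : a = g (j abar) := (hgk abar).symm
    calc s' * a * s'⁻¹ = g (s * j abar * s⁻¹) := by
          rw [e1, hs']; simp [map_mul, map_inv]
      _ = g (j (xbar * abar * xbar⁻¹)) := by rw [hs1 abar hmem]
      _ = ↑(xbar * abar * xbar⁻¹) := hgk _
      _ = x * a * x⁻¹ := by push_cast; rfl
  · intro a ha
    set abar : ↥K := ⟨a, hBK (hFB ha)⟩ with habar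
    have e1 : a = g (j abar) := (hgk abar).symm
    calc s' ^ n * a * (s' ^ n)⁻¹ = g (s ^ n * j abar * (s ^ n)⁻¹) := by
          rw [e1, hs']; simp [map_mul, map_inv, map_pow]
      _ = g (j (cbar * abar * cbar⁻¹)) := by rw [hs2 abar]
      _ = ↑(cbar * abar * cbar⁻¹) := hgk _
      _ = c * a * c⁻¹ := by push_cast; rfl
      _ = y₀ a := (hc' a (hFB ha)).symm

end ExtStep
section TopStep
universe u
variable {H : Type u} [Group H]

lemma cylinder_subset_of_isOpen (U : Set (MulAut H)) (hU : IsOpen U)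
    (y₀ : MulAut H) (hy₀ : y₀ ∈ U) :
    ∃ I : Finset H, ∀ y : MulAut H, (∀ b ∈ I, y b = y₀ b) → y ∈ U := by
  letI : TopologicalSpace H := ⊥
  rw [show (hallAutTopology H) = TopologicalSpace.induced
      (fun f : MulAut H => (f : H → H)) Pi.topologicalSpace from rfl] at hU
  rw [isOpen_induced_iff] at hU
  obtain ⟨W, hW, hpre⟩ := hU
  have hyW : (y₀ : H → H) ∈ W := by
    rw [← hpre] at hy₀; exact hy₀
  obtain ⟨I, u, hIu, hsub⟩ := (isOpen_pi_iff.1 hW) (y₀ : H → H) hyW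
  refine ⟨I, fun y hy => ?_⟩
  have : (y : H → H) ∈ W := by
    apply hsub
    rw [Set.mem_pi]
    intro b hb
    rw [show (y : H → H) b = y₀ b from hy b (Finset.mem_coe.1 hb)]
    exact (hIu b (Finset.mem_coe.1 hb)).2
  rw [← hpre]; exact this

lemma step_lemma (hH : IsHallUniversal H) (n : ℕ) (hn : 1 ≤ n)
    (A : Subgroup H) (hAfin : Finite ↥A) (x : H) (hx : x ∈ A) (a : H)
    (U : Set (MulAut H)) (hU : IsOpen U) (hdU : Dense U) :
    ∃ (A' : Subgroup H) (x' : H), Finite ↥A' ∧ x' ∈ A' ∧ A ≤ A' ∧ a ∈ A' ∧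
      (∀ b ∈ A, x' * b * x'⁻¹ = x * b * x⁻¹) ∧
      (∀ y : MulAut H, (∀ b ∈ A', y b = x' ^ n * b * (x' ^ n)⁻¹) → y ∈ U) := by
  classical
  haveI := hAfin
  set V : Set (MulAut H) := {y | ∀ b ∈ A, y b = x ^ n * b * (x ^ n)⁻¹} with hVdef
  have hVopen : IsOpen V := by
    letI : TopologicalSpace H := ⊥
    haveI : DiscreteTopology H := discreteTopology_bot H
    have hVeq : V = (fun y : MulAut H => (y : H → H)) ⁻¹'
        (Set.pi (A : Set H) (fun b => {x ^ n * b * (x ^ n)⁻¹})) := by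
      ext y
      constructor
      · intro hy
        rw [Set.mem_preimage, Set.mem_pi]
        intro b hb
        rw [Set.mem_singleton_iff]
        exact hy b hb
      · intro hy b hb
        rw [Set.mem_preimage, Set.mem_pi] at hy
        exact Set.mem_singleton_iff.1 (hy b hb)
    rw [show (hallAutTopology H) = TopologicalSpace.induced
        (fun f : MulAut H => (f : H → H)) Pi.topologicalSpace from rfl,
      isOpen_induced_iff]
    exact ⟨_, isOpen_set_pi (Set.toFinite _) (fun i _ => isOpen_discrete _), hVeq.symm⟩
  have hVne : V.Nonempty := ⟨MulAut.conj (x ^ n), fun b _ => MulAut.conj_apply (x ^ n) b⟩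
  obtain ⟨y₀, hy₀V, hy₀U⟩ := hdU.inter_open_nonempty V hVopen hVne
  obtain ⟨I, hI⟩ := cylinder_subset_of_isOpen U hU y₀ hy₀U
  obtain ⟨A', x', h1, h2, h3, h4, h5, h6⟩ :=
    ext_step hH n hn A hAfin x hx y₀ (fun b hb => hy₀V b hb) (I ∪ {a})
  refine ⟨A', x', h1, h2, h3, ?_, h5, ?_⟩
  · exact h4 (Finset.mem_coe.2 (Finset.mem_union_right _ (Finset.mem_singleton_self a)))
  · intro y hy
    apply hI
    intro b hb
    have hbA' : b ∈ A' := h4 (Finset.mem_coe.2 (Finset.mem_union_left _ hb))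
    rw [hy b hbA', h6 b (Finset.mem_union_left _ hb)]

end TopStep
/-- **Every generic automorphism of a Hall universal group has roots of all orders:**
for every `n ≥ 1` there is `h ∈ Aut H` with `hⁿ = g`. -/
theorem hallUniversal_generic_has_roots
    (H : Type*) [Group H] (hH : IsHallUniversal H) (g : MulAut H)
    (hg : {h : MulAut H | ∃ f : MulAut H, h = f * g * f⁻¹} ∈ residual (MulAut H))
    (n : ℕ) (hn : 1 ≤ n) :
    ∃ h : MulAut H, h ^ n = g := by
  classical
  obtain ⟨S, hSopen, hSdense, hScount, hSsub⟩ := mem_residual_iff.1 hg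
  set S' : Set (Set (MulAut H)) := insert Set.univ S with hS'def
  obtain ⟨Useq, hUeq⟩ := Set.Countable.exists_eq_range
    (hScount.insert Set.univ) ⟨Set.univ, Set.mem_insert _ _⟩
  have hUmem : ∀ k, Useq k ∈ S' := by
    intro k
    rw [hS'def, hUeq]
    exact Set.mem_range_self k
  have hUopen : ∀ k, IsOpen (Useq k) := by
    intro k
    rcases hUmem k with h | h
    · rw [h]; exact isOpen_univ
    · exact hSopen _ h
  have hUdense : ∀ k, Dense (Useq k) := by
    intro k
    rcases hUmem k with h | h
    · rw [h]; exact dense_univ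
    · exact hSdense _ h
  have hUsub : ∀ z : MulAut H, (∀ k, z ∈ Useq k) → ∃ f : MulAut H, z = f * g * f⁻¹ := by
    intro z hz
    apply hSsub
    intro t ht
    have ht2 : t ∈ Set.range Useq := by
      rw [← hUeq]; exact Set.mem_insert_of_mem _ ht
    obtain ⟨k, hk⟩ := ht2
    rw [← hk]
    exact hz k
  haveI : Countable H := hH.countable
  obtain ⟨enum, henum⟩ := exists_surjective_nat H
  -- the state type for the back-and-forth construction
  let T := {q : Subgroup H × H // Finite ↥q.1 ∧ q.2 ∈ q.1}
  have hstep : ∀ (q : T) (k : ℕ), ∃ q' : T,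
      q.1.1 ≤ q'.1.1 ∧ enum k ∈ q'.1.1 ∧
      (∀ b ∈ q.1.1, q'.1.2 * b * q'.1.2⁻¹ = q.1.2 * b * q.1.2⁻¹) ∧
      (∀ y : MulAut H, (∀ b ∈ q'.1.1, y b = q'.1.2 ^ n * b * (q'.1.2 ^ n)⁻¹) →
        y ∈ Useq k) := by
    intro q k
    obtain ⟨A', x', h1, h2, h3, h4, h5, h6⟩ := step_lemma hH n hn q.1.1 q.2.1 q.1.2 q.2.2
      (enum k) (Useq k) (hUopen k) (hUdense k)
    exact ⟨⟨(A', x'), h1, h2⟩, h3, h4, h5, h6⟩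
  choose stepF hst1 hst2 hst3 hst4 using hstep
  have hbotfin : Finite ↥(⊥ : Subgroup H) := inferInstance
  let q0 : T := ⟨(⊥, 1), hbotfin, Subgroup.one_mem _⟩
  let St : ℕ → T := fun i => Nat.rec q0 (fun i q => stepF q i) i
  have hStsucc : ∀ i, St (i + 1) = stepF (St i) i := fun i => rfl
  set Aseq : ℕ → Subgroup H := fun i => (St i).1.1 with hAseq
  set xseq : ℕ → H := fun i => (St i).1.2 with hxseq
  have hxmem : ∀ i, xseq i ∈ Aseq i := fun i => (St i).2.2
  have hAfin : ∀ i, Finite ↥(Aseq i) := fun i => (St i).2.1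
  have mono : ∀ i, Aseq i ≤ Aseq (i + 1) := fun i => hst1 (St i) i
  have monoLe : ∀ i j, i ≤ j → Aseq i ≤ Aseq j := by
    intro i j hij
    induction j, hij using Nat.le_induction with
    | base => exact le_rfl
    | succ j hij ih => exact le_trans ih (mono j)
  have compat1 : ∀ i, ∀ b ∈ Aseq i,
      xseq (i + 1) * b * (xseq (i + 1))⁻¹ = xseq i * b * (xseq i)⁻¹ :=
    fun i => hst3 (St i) i
  have compatLe : ∀ i j, i ≤ j → ∀ b ∈ Aseq i,
      xseq j * b * (xseq j)⁻¹ = xseq i * b * (xseq i)⁻¹ := by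
    intro i j hij
    induction j, hij using Nat.le_induction with
    | base => intro b _; rfl
    | succ j hij ih =>
      intro b hb
      rw [compat1 j b (monoLe i j hij hb), ih b hb]
  have welldef : ∀ i j (b : H), b ∈ Aseq i → b ∈ Aseq j →
      xseq i * b * (xseq i)⁻¹ = xseq j * b * (xseq j)⁻¹ := by
    intro i j b hbi hbj
    rcases le_total i j with h | h
    · rw [compatLe i j h b hbi]
    · rw [compatLe j i h b hbj]
  have compatLe' : ∀ i j, i ≤ j → ∀ b ∈ Aseq i,
      (xseq j)⁻¹ * b * xseq j = (xseq i)⁻¹ * b * xseq i := by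
    intro i j hij b hb
    have hb' : (xseq i)⁻¹ * b * xseq i ∈ Aseq i :=
      (Aseq i).mul_mem ((Aseq i).mul_mem ((Aseq i).inv_mem (hxmem i)) hb) (hxmem i)
    have e := compatLe i j hij _ hb'
    have e2 : xseq j * ((xseq i)⁻¹ * b * xseq i) * (xseq j)⁻¹ = b := by
      rw [e]; group
    calc (xseq j)⁻¹ * b * xseq j
        = (xseq j)⁻¹ * (xseq j * ((xseq i)⁻¹ * b * xseq i) * (xseq j)⁻¹) * xseq j := by
          rw [e2]
      _ = (xseq i)⁻¹ * b * xseq i := by group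
  have welldef' : ∀ i j (b : H), b ∈ Aseq i → b ∈ Aseq j →
      (xseq i)⁻¹ * b * xseq i = (xseq j)⁻¹ * b * xseq j := by
    intro i j b hbi hbj
    rcases le_total i j with h | h
    · rw [compatLe' i j h b hbi]
    · rw [compatLe' j i h b hbj]
  have exhaust : ∀ b : H, ∃ i, b ∈ Aseq i := by
    intro b
    obtain ⟨k, hk⟩ := henum b
    exact ⟨k + 1, by rw [← hk]; exact hst2 (St k) k⟩
  set idx : H → ℕ := fun b => Classical.choose (exhaust b) with hidx
  have idx_spec : ∀ b, b ∈ Aseq (idx b) := fun b => Classical.choose_spec (exhaust b)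
  set φ : H → H := fun b => xseq (idx b) * b * (xseq (idx b))⁻¹ with hφ
  set ψ : H → H := fun b => (xseq (idx b))⁻¹ * b * xseq (idx b) with hψ
  have φ_spec : ∀ i (b : H), b ∈ Aseq i → φ b = xseq i * b * (xseq i)⁻¹ :=
    fun i b hb => welldef (idx b) i b (idx_spec b) hb
  have ψ_spec : ∀ i (b : H), b ∈ Aseq i → ψ b = (xseq i)⁻¹ * b * xseq i :=
    fun i b hb => welldef' (idx b) i b (idx_spec b) hb
  have memconj : ∀ i (b : H), b ∈ Aseq i → xseq i * b * (xseq i)⁻¹ ∈ Aseq i :=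
    fun i b hb => (Aseq i).mul_mem ((Aseq i).mul_mem (hxmem i) hb) ((Aseq i).inv_mem (hxmem i))
  have meminvconj : ∀ i (b : H), b ∈ Aseq i → (xseq i)⁻¹ * b * xseq i ∈ Aseq i :=
    fun i b hb => (Aseq i).mul_mem ((Aseq i).mul_mem ((Aseq i).inv_mem (hxmem i)) hb) (hxmem i)
  let h : MulAut H :=
    { toFun := φ
      invFun := ψ
      left_inv := by
        intro b
        have hb := idx_spec b
        set i := idx b
        have h1 : φ b = xseq i * b * (xseq i)⁻¹ := rfl
        have h2 : ψ (φ b) = (xseq i)⁻¹ * (φ b) * xseq i :=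
          ψ_spec i (φ b) (by rw [h1]; exact memconj i b hb)
        rw [h2, h1]; group
      right_inv := by
        intro b
        have hb := idx_spec b
        set i := idx b
        have h1 : ψ b = (xseq i)⁻¹ * b * xseq i := rfl
        have h2 : φ (ψ b) = xseq i * (ψ b) * (xseq i)⁻¹ :=
          φ_spec i (ψ b) (by rw [h1]; exact meminvconj i b hb)
        rw [h2, h1]; group
      map_mul' := by
        intro b b'
        set i := max (idx b) (idx b')
        have hbi : b ∈ Aseq i := monoLe _ i (le_max_left _ _) (idx_spec b)
        have hbi' : b' ∈ Aseq i := monoLe _ i (le_max_right _ _) (idx_spec b')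
        show φ (b * b') = φ b * φ b'
        rw [φ_spec i _ ((Aseq i).mul_mem hbi hbi'), φ_spec i b hbi, φ_spec i b' hbi']
        group }
  have happly : ∀ (b : H), h b = φ b := fun b => rfl
  have hpow : ∀ (t : ℕ) i (b : H), b ∈ Aseq i →
      (h ^ t) b = xseq i ^ t * b * (xseq i ^ t)⁻¹ := by
    intro t
    induction t with
    | zero => intro i b _; simp
    | succ t ih =>
      intro i b hb
      have hmem : xseq i ^ t * b * (xseq i ^ t)⁻¹ ∈ Aseq i :=
        (Aseq i).mul_mem ((Aseq i).mul_mem ((Aseq i).pow_mem (hxmem i) t) hb)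
          ((Aseq i).inv_mem ((Aseq i).pow_mem (hxmem i) t))
      rw [pow_succ', MulAut.mul_apply, ih i b hb, happly, φ_spec i _ hmem, pow_succ']
      group
  have hhn : ∀ k, h ^ n ∈ Useq k := by
    intro k
    apply hst4 (St k) k
    intro b hb
    exact hpow n (k + 1) b hb
  obtain ⟨f, hf⟩ := hUsub (h ^ n) hhn
  refine ⟨f⁻¹ * h * f, ?_⟩
  calc (f⁻¹ * h * f) ^ n = (f⁻¹ * h * (f⁻¹)⁻¹) ^ n := by rw [inv_inv]
    _ = f⁻¹ * h ^ n * (f⁻¹)⁻¹ := conj_pow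
    _ = f⁻¹ * (f * g * f⁻¹) * f := by rw [inv_inv, hf]
    _ = g := by group
end

section
/- Let H be a Hall universal group and let g ∈ Aut(H) be a generic automorphism, i.e., the conjugacy class { f g f⁻¹ : f ∈ Aut(H) } is comeager in Aut(H). Then g has infinite order in the group Aut(H): gⁿ is not the identity automorphism for any integer n ≥ 1. -/
/-! If `g ^ n = 1`, then every conjugate `h` of `g` satisfies `h ^ n = 1`, a closed condition
in the topological group `Aut H`. Since `H` is countable, `Aut H` is Polish, hence Baire, so the
comeager conjugacy class of `g` is dense and `h ^ n = 1` holds for every automorphism `h`. This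
fails for conjugation by the image of the rotation `r` of the dihedral group of order `2 (2n + 1)`,
which embeds in `H`: that group has trivial centre, so `rⁿ` is not central in `H`. -/

open Topology TopologicalSpace

namespace MulAut

variable {H : Type*} [Group H]

section Discrete

variable [TopologicalSpace H] [DiscreteTopology H]

theorem isInducing_coe : IsInducing fun f : MulAut H => (f : H → H) :=
  ⟨by rw [DiscreteTopology.eq_bot (α := H)]; rfl⟩

theorem continuous_eval_const (a : H) : Continuous fun f : MulAut H => f a :=
  (continuous_apply a).comp isInducing_coe.continuous

theorem continuous_eval : Continuous fun p : MulAut H × H => p.1 p.2 :=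
  continuous_prod_of_discrete_right.2 continuous_eval_const

theorem continuous_coe_inv : Continuous fun f : MulAut H => ((f⁻¹ : MulAut H) : H → H) := by
  refine continuous_pi fun a => continuous_discrete_rng.2 fun b => ?_
  have hpre : (fun f : MulAut H => (f⁻¹ : MulAut H) a) ⁻¹' {b} =
      (fun f : MulAut H => f b) ⁻¹' {a} := by
    ext f
    exact (MulEquiv.symm_apply_eq f).trans eq_comm
  rw [hpre]
  exact (isOpen_discrete {a}).preimage (continuous_eval_const b)

-- Recording the inverse makes the range closed; the range of `coe` alone is only `Gδ`.
theorem isClosedEmbedding_coe_prod_coe_inv :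
    IsClosedEmbedding fun f : MulAut H => ((f : H → H), ((f⁻¹ : MulAut H) : H → H)) := by
  have hcont := isInducing_coe.continuous.prodMk (continuous_coe_inv (H := H))
  refine ⟨⟨IsInducing.of_comp hcont continuous_fst isInducing_coe,
    fun f f' h => DFunLike.coe_injective (congrArg Prod.fst h)⟩, ?_⟩
  have hrange : Set.range (fun f : MulAut H => ((f : H → H), ((f⁻¹ : MulAut H) : H → H))) =
      {p | (∀ x y, p.1 (x * y) = p.1 x * p.1 y) ∧ (∀ x, p.2 (p.1 x) = x) ∧
        ∀ x, p.1 (p.2 x) = x} := by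
    ext ⟨u, v⟩
    constructor
    · rintro ⟨f, hf⟩
      obtain ⟨rfl, rfl⟩ := Prod.mk.inj hf
      exact ⟨map_mul f, f.symm_apply_apply, f.apply_symm_apply⟩
    · rintro ⟨hmul, hleft, hright⟩
      exact ⟨⟨⟨u, v, hleft, hright⟩, hmul⟩, rfl⟩
  rw [hrange]
  simp only [Set.ofPred_and, Set.ofPred_forall]
  have heval : Continuous fun q : (H → H) × H => q.1 q.2 :=
    continuous_prod_of_discrete_right.2 continuous_apply
  have ev₁ (x : H) : Continuous fun p : (H → H) × (H → H) => p.1 x := by fun_prop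
  have ev₂ (x : H) : Continuous fun p : (H → H) × (H → H) => p.2 x := by fun_prop
  refine (isClosed_iInter fun x => isClosed_iInter fun y => isClosed_eq (ev₁ _) ?_).inter
    ((isClosed_iInter fun x => isClosed_eq ?_ continuous_const).inter
      (isClosed_iInter fun x => isClosed_eq ?_ continuous_const))
  · exact (ev₁ x).mul (ev₁ y)
  · exact heval.comp (continuous_snd.prodMk (ev₁ x))
  · exact heval.comp (continuous_fst.prodMk (ev₂ x))

end Discrete

instance : IsTopologicalGroup (MulAut H) := by
  let : TopologicalSpace H := ⊥
  have : DiscreteTopology H := ⟨rfl⟩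
  refine
    { continuous_mul := isInducing_coe.continuous_iff.2 <| continuous_pi fun a => ?_
      continuous_inv := isInducing_coe.continuous_iff.2 continuous_coe_inv }
  exact continuous_eval.comp
    (continuous_fst.prodMk ((continuous_eval_const a).comp continuous_snd))

instance [Countable H] : PolishSpace (MulAut H) := by
  let : TopologicalSpace H := ⊥
  have : DiscreteTopology H := ⟨rfl⟩
  have : SeparableSpace (H → H) := inferInstance
  exact isClosedEmbedding_coe_prod_coe_inv.polishSpace

theorem conj_eq_one_iff {z : H} : conj z = 1 ↔ z ∈ Subgroup.center H := by
  rw [Subgroup.mem_center_iff, MulEquiv.ext_iff]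
  refine forall_congr' fun x => ?_
  rw [conj_apply, one_apply, mul_inv_eq_iff_eq_mul, eq_comm]

end MulAut

theorem Subgroup.mem_center_of_map_mem_center {G H : Type*} [Group G] [Group H] {φ : G →* H}
    (hφ : Function.Injective φ) {x : G} (hx : φ x ∈ center H) : x ∈ center G :=
  mem_center_iff.2 fun y => hφ <| by simp only [map_mul, mem_center_iff.1 hx]

theorem DihedralGroup.r_one_pow_notMem_center {n : ℕ} (hn : n ≠ 0) :
    (r 1 : DihedralGroup (2 * n + 1)) ^ n ∉ Subgroup.center (DihedralGroup (2 * n + 1)) := by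
  rw [center_eq_bot_of_odd_ne_one (odd_two_mul_add_one n) (by omega), Subgroup.mem_bot]
  exact pow_ne_one_of_lt_orderOf hn (by rw [orderOf_r_one]; omega)

theorem IsHallUniversal.exists_conj_pow_ne_one {H : Type*} [Group H] (hH : IsHallUniversal H)
    {n : ℕ} (hn : n ≠ 0) : ∃ x : H, MulAut.conj x ^ n ≠ 1 := by
  have : NeZero (2 * n + 1) := ⟨by omega⟩
  obtain ⟨φ, hφ⟩ := hH.embedsFinite (DihedralGroup (2 * n + 1))
  refine ⟨φ (DihedralGroup.r 1), fun h => DihedralGroup.r_one_pow_notMem_center hn ?_⟩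
  rw [← map_pow, MulAut.conj_eq_one_iff, ← map_pow] at h
  exact Subgroup.mem_center_of_map_mem_center hφ h

theorem pow_eq_one_of_dense_conj {G : Type*} [Group G] [TopologicalSpace G] [ContinuousMul G]
    [T1Space G] {g : G} (hg : Dense {h | ∃ f, h = f * g * f⁻¹}) {n : ℕ} (hgn : g ^ n = 1)
    (h : G) : h ^ n = 1 := by
  have hclosed : IsClosed {h : G | h ^ n = 1} := isClosed_singleton.preimage (continuous_pow n)
  have hconj : {h | ∃ f, h = f * g * f⁻¹} ⊆ {h : G | h ^ n = 1} := by
    rintro _ ⟨f, rfl⟩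
    show (f * g * f⁻¹) ^ n = 1
    rw [conj_pow, hgn, mul_one, mul_inv_cancel]
  exact closure_minimal hconj hclosed (hg h)

/-- **Every generic automorphism of a Hall universal group has infinite order:**
`gⁿ ≠ 1` for every `n ≥ 1`. -/
theorem hallUniversal_generic_infinite_order
    (H : Type*) [Group H] (hH : IsHallUniversal H) (g : MulAut H)
    (hg : {h : MulAut H | ∃ f : MulAut H, h = f * g * f⁻¹} ∈ residual (MulAut H))
    (n : ℕ) (hn : 1 ≤ n) :
    g ^ n ≠ 1 := by
  have : Countable H := hH.countable
  obtain ⟨x, hx⟩ := hH.exists_conj_pow_ne_one (n := n) (by omega)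
  exact fun hgn => hx (pow_eq_one_of_dense_conj (dense_of_mem_residual hg) hgn _)
end
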